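/- arXiv:1512.04703 — 8 statements merged into one kernel-verified Lean document; each statement's English description precedes it below -/
import Mathlib

section
/- Let p be a prime, A a commutative Noetherian ring of characteristic p, and I ⊆ A an ideal such that A is I-adically complete. Then A is F-finite if and only if A/I is F-finite. -/
open Finset Function

/-- Finset of `k`-fold products of elements of `t`. -/
def FFin.prodPow {A : Type*} [CommRing A] [DecidableEq A] (t : Finset A) : ℕ → Finset A
  | 0 => {1}
  | k+1 => Finset.image₂ (· * ·) t (FFin.prodPow t k)

namespace FFin

section ProdPow

variable {A : Type*} [CommRing A] [DecidableEq A] (t : Finset A)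

lemma span_prodPow (k : ℕ) :
    Ideal.span (prodPow t k : Set A) = Ideal.span (t : Set A) ^ k := by
  induction k with
  | zero => simp [prodPow, Ideal.span_singleton_one]
  | succ k ih =>
    rw [pow_succ, ← ih, prodPow, Finset.coe_image₂, Set.image2_mul,
      ← Ideal.span_mul_span', mul_comm]

lemma exists_multiset_of_mem_prodPow {k : ℕ} {a : A} (ha : a ∈ prodPow t k) :
    ∃ m : Multiset A, (∀ z ∈ m, z ∈ t) ∧ Multiset.card m = k ∧ m.prod = a := by
  induction k generalizing a with
  | zero =>
    simp only [prodPow, Finset.mem_singleton] at ha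
    exact ⟨0, by simp, by simp, by simp [ha]⟩
  | succ k ih =>
    simp only [prodPow, Finset.mem_image₂] at ha
    obtain ⟨y, hy, b, hb, rfl⟩ := ha
    obtain ⟨m, hm1, hm2, hm3⟩ := ih hb
    exact ⟨y ::ₘ m, by
      intro z hz
      rcases Multiset.mem_cons.1 hz with h | h
      · exact h ▸ hy
      · exact hm1 z h, by simp [hm2], by simp [hm3]⟩

lemma pow_le_span_frobPow (p : ℕ) (hp : 0 < p) :
    Ideal.span (t : Set A) ^ (t.card * (p - 1) + 1) ≤
      Ideal.span ((· ^ p) '' (t : Set A)) := by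
  set N := t.card * (p - 1) + 1 with hN
  rw [← span_prodPow, Ideal.span_le]
  intro a ha
  obtain ⟨m, hm1, hm2, rfl⟩ := exists_multiset_of_mem_prodPow t ha
  have hsub : m.toFinset ⊆ t := fun z hz => hm1 z (Multiset.mem_toFinset.1 hz)
  have hex : ∃ y ∈ t, p ≤ m.count y := by
    by_contra hcon
    push_neg at hcon
    have hle : ∀ z ∈ m.toFinset, m.count z ≤ p - 1 := by
      intro z hz
      have := hcon z (hsub hz)
      omega
    have h1 : Multiset.card m ≤ m.toFinset.card * (p - 1) := by
      rw [← Multiset.toFinset_sum_count_eq]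
      calc ∑ z ∈ m.toFinset, m.count z ≤ ∑ _z ∈ m.toFinset, (p - 1) :=
            Finset.sum_le_sum hle
        _ = m.toFinset.card * (p - 1) := by rw [Finset.sum_const, smul_eq_mul]
    have hcard : m.toFinset.card ≤ t.card := Finset.card_le_card hsub
    have : Multiset.card m ≤ t.card * (p - 1) :=
      h1.trans (Nat.mul_le_mul_right _ hcard)
    omega
  obtain ⟨y, hy, hcount⟩ := hex
  have hrep : Multiset.replicate p y ≤ m := (Multiset.le_count_iff_replicate_le).1 hcount
  obtain ⟨u, rfl⟩ := Multiset.le_iff_exists_add.1 hrep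
  rw [Multiset.prod_add, Multiset.prod_replicate]
  exact Ideal.mul_mem_right _ _ (Ideal.subset_span ⟨y, hy, rfl⟩)

end ProdPow

section Rep

variable {A : Type*} [CommRing A] (p : ℕ) (s : Finset A)

/-- An element of `A` which is a combination `∑ (c x)^p * x` over `x ∈ s` with all
coefficients `c x` in the ideal `J`. -/
def Rep (J : Ideal A) (b : A) : Prop :=
  ∃ c : A → A, (∀ x, c x ∈ J) ∧ b = ∑ x ∈ s, (c x) ^ p * x

variable {p s}

lemma rep_zero (hp : p ≠ 0) (J : Ideal A) : Rep p s J 0 :=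
  ⟨0, fun _ => J.zero_mem, by simp [zero_pow hp]⟩

lemma rep_mono {J J' : Ideal A} (h : J ≤ J') {b : A} (hb : Rep p s J b) : Rep p s J' b := by
  obtain ⟨c, hc, rfl⟩ := hb
  exact ⟨c, fun x => h (hc x), rfl⟩

lemma rep_add [ExpChar A p] {J : Ideal A} {b₁ b₂ : A}
    (h₁ : Rep p s J b₁) (h₂ : Rep p s J b₂) : Rep p s J (b₁ + b₂) := by
  obtain ⟨c₁, hc₁, rfl⟩ := h₁
  obtain ⟨c₂, hc₂, rfl⟩ := h₂
  refine ⟨c₁ + c₂, fun x => J.add_mem (hc₁ x) (hc₂ x), ?_⟩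
  rw [← Finset.sum_add_distrib]
  refine Finset.sum_congr rfl fun x _ => ?_
  rw [Pi.add_apply, add_pow_expChar, add_mul]

lemma rep_sum [ExpChar A p] {J : Ideal A} {ι : Type*} (u : Finset ι) (F : ι → A)
    (hp : p ≠ 0) (h : ∀ i ∈ u, Rep p s J (F i)) : Rep p s J (∑ i ∈ u, F i) :=
  Finset.sum_induction F (Rep p s J) (fun _ _ => rep_add) (rep_zero hp J) h

/-- combinations `∑ (F i)^p * G i` with `G` mapping into `s` are `Rep`s. -/
lemma rep_fiber [ExpChar A p] [DecidableEq A] {J : Ideal A} (u : Finset A) (F G : A → A)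
    (hG : ∀ i ∈ u, G i ∈ s) (hF : ∀ i, F i ∈ J) :
    Rep p s J (∑ i ∈ u, (F i) ^ p * G i) := by
  refine ⟨fun w => ∑ i ∈ u.filter (fun i => G i = w), F i,
    fun w => Submodule.sum_mem _ fun i _ => hF i, ?_⟩
  rw [← Finset.sum_fiberwise_of_maps_to hG (fun i => (F i) ^ p * G i)]
  refine Finset.sum_congr rfl fun w _ => ?_
  rw [← frobenius_def (R := A) p, map_sum]
  rw [Finset.sum_mul]
  refine Finset.sum_congr rfl fun i hi => ?_
  rw [frobenius_def]
  congr 1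
  exact (Finset.mem_filter.1 hi).2

end Rep

end FFin

/-- A commutative ring `B` is `F`-finite (with respect to the prime `p`) if the `p`-th power
map is a ring endomorphism making `B` into a finitely generated module over itself via
restriction of scalars along it. -/
def IsFFinite (p : ℕ) (B : Type*) [CommRing B] : Prop :=
  ∃ f : B →+* B, (∀ x : B, f x = x ^ p) ∧ f.Finite

/-- If `A` is a Noetherian ring of characteristic `p` which is `I`-adically complete with
respect to an ideal `I ⊆ A`, then `A` is F-finite if and only if `A/I` is F-finite. -/
theorem isFFinite_iff_quotient_of_adicComplete (p : ℕ) [Fact p.Prime]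
    (A : Type*) [CommRing A] [IsNoetherianRing A] [CharP A p]
    (I : Ideal A) [IsAdicComplete I A] :
    IsFFinite p A ↔ IsFFinite p (A ⧸ I) := by
  have hp : 0 < p := (Fact.out (p := p.Prime)).pos
  constructor
  · rintro ⟨f, hf, hfin⟩
    have hmap : ∀ a ∈ I, (Ideal.Quotient.mk I).comp f a = 0 := by
      intro a ha
      simp only [RingHom.comp_apply, hf]
      exact Ideal.Quotient.eq_zero_iff_mem.2 (Ideal.pow_mem_of_mem I ha p hp)
    refine ⟨Ideal.Quotient.lift I ((Ideal.Quotient.mk I).comp f) hmap, ?_, ?_⟩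
    · intro x
      obtain ⟨a, rfl⟩ := Ideal.Quotient.mk_surjective x
      simp [hf]
    · have hcomp : (Ideal.Quotient.lift I ((Ideal.Quotient.mk I).comp f) hmap).comp
          (Ideal.Quotient.mk I) = (Ideal.Quotient.mk I).comp f := by
        ext a; simp
      exact RingHom.Finite.of_comp_finite (f := Ideal.Quotient.mk I)
        (hcomp ▸ (RingHom.Finite.of_surjective _ Ideal.Quotient.mk_surjective).comp hfin)
  · rintro ⟨g, hg, hgfin⟩
    classical
    set φ := frobenius A p with hφdef
    have hφ : ∀ x : A, φ x = x ^ p := fun x => frobenius_def p x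
    -- Step 0: a finite set s₀ ⊆ A approximating generation modulo I
    obtain ⟨s₀, hs₀⟩ : ∃ s₀ : Finset A, ∀ a : A,
        ∃ e : A → A, a - ∑ x ∈ s₀, (e x) ^ p * x ∈ I := by
      letI : Algebra (A ⧸ I) (A ⧸ I) := g.toAlgebra
      letI : Module (A ⧸ I) (A ⧸ I) := Algebra.toModule
      have hfin : Module.Finite (A ⧸ I) (A ⧸ I) := hgfin
      obtain ⟨S, hS⟩ := hfin.fg_top
      set σ : (A ⧸ I) → A := surjInv Ideal.Quotient.mk_surjective with hσdef
      have hσ : ∀ z, Ideal.Quotient.mk I (σ z) = z := fun z => surjInv_eq _ z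
      have hσinj : Function.Injective σ := injective_surjInv _
      refine ⟨S.image σ, fun a => ?_⟩
      have ha : Ideal.Quotient.mk I a ∈ Submodule.span (A ⧸ I) (S : Set (A ⧸ I)) := by
        rw [hS]; trivial
      obtain ⟨f, -, hf⟩ := Submodule.mem_span_finset.1 ha
      refine ⟨fun x => σ (f (Ideal.Quotient.mk I x)), ?_⟩
      rw [← Ideal.Quotient.eq]
      rw [map_sum]
      rw [Finset.sum_image (fun z _ w _ h => hσinj h)]
      rw [← hf]
      refine Finset.sum_congr rfl fun z hz => ?_
      rw [map_mul, map_pow, hσ, hσ]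
      rw [Algebra.smul_def, RingHom.algebraMap_toAlgebra, hg]
    -- generators of I
    obtain ⟨t, ht⟩ : I.FG := IsNoetherian.noetherian I
    set N := t.card * (p - 1) + 1 with hNdef
    set s : Finset A :=
      (Finset.range N).biUnion (fun k => Finset.image₂ (· * ·) (FFin.prodPow t k) s₀) with hsdef
    -- Phase 1, single step
    have Qstep : ∀ k, k < N → ∀ a ∈ I ^ k,
        ∃ b, FFin.Rep p s ⊤ b ∧ a - b ∈ I ^ (k + 1) := by
      intro k hk a ha
      have ha' : a ∈ Ideal.span (FFin.prodPow t k : Set A) := by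
        rw [FFin.span_prodPow, ht]; exact ha
      obtain ⟨n, f, gg, hsum⟩ := Submodule.mem_span_set'.1 ha'
      have hterm : ∀ i : Fin n,
          ∃ b, FFin.Rep p s ⊤ b ∧ f i • (gg i : A) - b ∈ I ^ (k + 1) := by
        intro i
        obtain ⟨e, he⟩ := hs₀ (f i)
        have hμs : (gg i : A) ∈ FFin.prodPow t k := (gg i).2
        refine ⟨∑ x ∈ s₀, (e x) ^ p * ((gg i : A) * x),
          FFin.rep_fiber s₀ e ((gg i : A) * ·) ?_ (fun _ => trivial), ?_⟩
        · intro x hx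
          exact Finset.mem_biUnion.2 ⟨k, Finset.mem_range.2 hk,
            Finset.mem_image₂.2 ⟨(gg i : A), hμs, x, hx, rfl⟩⟩
        · have key : f i • (gg i : A) - ∑ x ∈ s₀, (e x) ^ p * ((gg i : A) * x)
              = (f i - ∑ x ∈ s₀, (e x) ^ p * x) * (gg i : A) := by
            rw [smul_eq_mul, sub_mul, Finset.sum_mul]
            congr 1
            exact Finset.sum_congr rfl fun x _ => by ring
          rw [key, pow_succ']
          have hμk : (gg i : A) ∈ I ^ k := by
            rw [← ht, ← FFin.span_prodPow]; exact Ideal.subset_span hμs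
          exact Ideal.mul_mem_mul he hμk
      choose B hB1 hB2 using hterm
      refine ⟨∑ i, B i, FFin.rep_sum _ _ hp.ne' (fun i _ => hB1 i), ?_⟩
      have hdiff : a - ∑ i, B i = ∑ i, (f i • (gg i : A) - B i) := by
        rw [Finset.sum_sub_distrib, hsum]
      rw [hdiff]
      exact Submodule.sum_mem _ fun i _ => hB2 i
    -- Phase 1, chained
    have P1 : ∀ a : A, ∃ b, FFin.Rep p s ⊤ b ∧ a - b ∈ I ^ N := by
      have chain : ∀ m k, k + m = N → ∀ a ∈ I ^ k,
          ∃ b, FFin.Rep p s ⊤ b ∧ a - b ∈ I ^ N := by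
        intro m
        induction m with
        | zero =>
          intro k hk a ha
          refine ⟨0, FFin.rep_zero hp.ne' ⊤, ?_⟩
          rw [sub_zero]
          have hkN : k = N := by omega
          exact hkN ▸ ha
        | succ m ih =>
          intro k hk a ha
          obtain ⟨b₁, hb₁, hr₁⟩ := Qstep k (by omega) a ha
          obtain ⟨b₂, hb₂, hr₂⟩ := ih (k + 1) (by omega) _ hr₁
          refine ⟨b₁ + b₂, FFin.rep_add hb₁ hb₂, ?_⟩
          have : a - (b₁ + b₂) = a - b₁ - b₂ := by ring
          rw [this]
          exact hr₂
      intro a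
      refine chain N 0 (by omega) a ?_
      simp [Ideal.one_eq_top]
    -- pigeonhole : I^N ⊆ φ(I)·A
    have hIN : I ^ N ≤ Ideal.map φ I := by
      conv_lhs => rw [← ht]
      refine le_trans (FFin.pow_le_span_frobPow t p hp) ?_
      rw [Ideal.span_le]
      rintro _ ⟨y, hy, rfl⟩
      have hyI : y ∈ I := ht ▸ Ideal.subset_span hy
      have := Ideal.mem_map_of_mem φ hyI
      rwa [hφ] at this
    -- powers of `I` absorb p-th powers
    have hpowmem : ∀ (J : Ideal A) (d : A), d ∈ J → d ^ p ∈ J := by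
      intro J d hd
      obtain ⟨q, rfl⟩ := Nat.exists_eq_succ_of_ne_zero hp.ne'
      rw [pow_succ]
      exact Ideal.mul_mem_left _ _ hd
    -- Phase 2 step
    have S2 : ∀ (j : ℕ) (a : A), a ∈ Ideal.map φ (I ^ j) →
        ∃ b, FFin.Rep p s (I ^ j) b ∧ a - b ∈ Ideal.map φ (I ^ (j + 1)) := by
      intro j a ha
      have ha' : a ∈ Submodule.span A (φ '' ((I ^ j : Ideal A) : Set A)) := ha
      obtain ⟨n, f, gg, hsum⟩ := Submodule.mem_span_set'.1 ha'
      have hterm : ∀ i : Fin n, ∃ b, FFin.Rep p s (I ^ j) b ∧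
          f i • (gg i : A) - b ∈ Ideal.map φ (I ^ (j + 1)) := by
        intro i
        obtain ⟨d, hd, hdeq⟩ := (gg i).2
        obtain ⟨b₀, hb₀, hr⟩ := P1 (f i)
        obtain ⟨e, _, he_eq⟩ := hb₀
        refine ⟨∑ x ∈ s, (d * e x) ^ p * x,
          ⟨fun x => d * e x, fun x => Ideal.mul_mem_right _ _ hd, rfl⟩, ?_⟩
        have hgi : (gg i : A) = d ^ p := by rw [← hdeq, hφ]
        have key : f i • (gg i : A) - ∑ x ∈ s, (d * e x) ^ p * x
            = (f i - b₀) * d ^ p := by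
          rw [smul_eq_mul, hgi, he_eq, sub_mul, Finset.sum_mul]
          congr 1
          exact Finset.sum_congr rfl fun x _ => by rw [mul_pow]; ring
        rw [key]
        have h1 : f i - b₀ ∈ Ideal.map φ I := hIN hr
        have h2 : d ^ p ∈ Ideal.map φ (I ^ j) := by
          rw [← hφ]; exact Ideal.mem_map_of_mem φ hd
        have hmul : (f i - b₀) * d ^ p ∈ Ideal.map φ I * Ideal.map φ (I ^ j) :=
          Ideal.mul_mem_mul h1 h2
        rwa [← Ideal.map_mul, ← pow_succ'] at hmul
      choose B hB1 hB2 using hterm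
      refine ⟨∑ i, B i, FFin.rep_sum _ _ hp.ne' (fun i _ => hB1 i), ?_⟩
      have hdiff : a - ∑ i, B i = ∑ i, (f i • (gg i : A) - B i) := by
        rw [Finset.sum_sub_distrib, hsum]
      rw [hdiff]
      exact Submodule.sum_mem _ fun i _ => hB2 i
    -- the map φ (I^n) are small
    have hmap_le : ∀ n : ℕ, Ideal.map φ (I ^ n) ≤ I ^ n := by
      intro n
      rw [Ideal.map, Ideal.span_le]
      rintro _ ⟨d, hd, rfl⟩
      rw [hφ]
      exact hpowmem _ _ hd
    have hsmul_top : ∀ n : ℕ, ((I ^ n : Ideal A) • (⊤ : Submodule A A)) = I ^ n := by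
      intro n
      rw [smul_eq_mul, Ideal.mul_top]
    -- main approximation: every element is a p-th power combination of s
    have main : ∀ a : A, ∃ ℓ : A → A, a = ∑ x ∈ s, (ℓ x) ^ p * x := by
      intro a
      let D : ∀ j : ℕ, {x : A // x ∈ Ideal.map φ (I ^ j)} := fun j =>
        Nat.rec ⟨a, by simp [Ideal.one_eq_top, Ideal.map_top]⟩
          (fun j prev => ⟨prev.1 - Classical.choose (S2 j prev.1 prev.2),
            (Classical.choose_spec (S2 j prev.1 prev.2)).2⟩) j
      let b : ℕ → A := fun j => Classical.choose (S2 j (D j).1 (D j).2)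
      have hbspec : ∀ j, FFin.Rep p s (I ^ j) (b j) ∧
          (D j).1 - b j ∈ Ideal.map φ (I ^ (j + 1)) :=
        fun j => Classical.choose_spec (S2 j (D j).1 (D j).2)
      have hD0 : (D 0).1 = a := rfl
      have hDsucc : ∀ j, (D (j + 1)).1 = (D j).1 - b j := fun j => rfl
      let e : ℕ → A → A := fun j => Classical.choose (hbspec j).1
      have he : ∀ j, (∀ x, e j x ∈ I ^ j) ∧ b j = ∑ x ∈ s, (e j x) ^ p * x :=
        fun j => Classical.choose_spec (hbspec j).1
      let C : ℕ → A → A := fun j x => ∑ k ∈ Finset.range j, e k x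
      have hpadd : ∀ u v : A, (u + v) ^ p = u ^ p + v ^ p := fun u v => by
        rw [← hφ, ← hφ, ← hφ, map_add]
      have hpsub : ∀ u v : A, (u - v) ^ p = u ^ p - v ^ p := fun u v => by
        rw [← hφ, ← hφ, ← hφ, map_sub]
      have hpartial : ∀ j, a - ∑ x ∈ s, (C j x) ^ p * x = (D j).1 := by
        intro j
        induction j with
        | zero =>
          simp only [C, Finset.range_zero, Finset.sum_empty, zero_pow hp.ne',
            zero_mul, Finset.sum_const_zero, sub_zero, hD0]
        | succ j ih =>
          rw [hDsucc j, ← ih, (he j).2]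
          have hCx : ∀ x : A, (C (j + 1) x) ^ p = (C j x) ^ p + (e j x) ^ p := by
            intro x
            rw [show C (j + 1) x = C j x + e j x from Finset.sum_range_succ _ _, hpadd]
          simp only [hCx, add_mul, Finset.sum_add_distrib]
          ring
      -- Cauchy sequences of coefficients
      have hCdiff : ∀ (x : A) (m n : ℕ), m ≤ n → C n x - C m x ∈ I ^ m := by
        intro x m n hmn
        induction n, hmn using Nat.le_induction with
        | base => simp
        | succ n hmn ih =>
          have : C (n + 1) x - C m x = (C n x - C m x) + e n x :=  by
            rw [show C (n + 1) x = C n x + e n x from Finset.sum_range_succ _ _]; ring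
          rw [this]
          exact Submodule.add_mem _ ih (Ideal.pow_le_pow_right hmn ((he n).1 x))
      have hlim : ∀ x : A, ∃ L, ∀ n, C n x ≡ L [SMOD ((I ^ n : Ideal A) • (⊤ : Submodule A A))] := by
        intro x
        refine IsPrecomplete.prec inferInstance ?_
        intro m n hmn
        rw [SModEq.sub_mem, hsmul_top]
        have hneg : C m x - C n x = -(C n x - C m x) := by ring
        rw [hneg]
        exact Submodule.neg_mem _ (hCdiff x m n hmn)
      choose ℓ hℓ using hlim
      refine ⟨ℓ, ?_⟩
      have hzero : a - ∑ x ∈ s, (ℓ x) ^ p * x = 0 := by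
        refine IsHausdorff.haus (IsAdicComplete.toIsHausdorff (I := I) (M := A)) _ fun n => ?_
        rw [SModEq.zero, hsmul_top]
        have h1 : (D n).1 ∈ I ^ n := hmap_le n (D n).2
        have h2 : ∑ x ∈ s, ((C n x) ^ p - (ℓ x) ^ p) * x ∈ I ^ n := by
          refine Submodule.sum_mem _ fun x hx => Ideal.mul_mem_right _ _ ?_
          rw [← hpsub]
          refine hpowmem _ _ ?_
          have := (hℓ x n)
          rw [SModEq.sub_mem, hsmul_top] at this
          exact this
        have hsplit : a - ∑ x ∈ s, (ℓ x) ^ p * x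
            = (D n).1 + ∑ x ∈ s, ((C n x) ^ p - (ℓ x) ^ p) * x := by
          rw [← hpartial n]
          simp only [sub_mul, Finset.sum_sub_distrib]
          ring
        rw [hsplit]
        exact Submodule.add_mem _ h1 h2
      have := sub_eq_zero.1 hzero
      exact this
    -- conclude
    refine ⟨φ, hφ, ?_⟩
    letI : Algebra A A := φ.toAlgebra
    letI : Module A A := Algebra.toModule
    letI : SMul A A := Algebra.toSMul
    have hfin : Module.Finite A A := by
      constructor
      refine ⟨s, ?_⟩
      rw [eq_top_iff]
      intro a _
      obtain ⟨ℓ, hℓa⟩ := main a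
      rw [hℓa]
      refine Submodule.sum_mem _ fun x hx => ?_
      have hx' : (ℓ x) ^ p * x = ℓ x • x := by
        rw [Algebra.smul_def, RingHom.algebraMap_toAlgebra, hφ]
      rw [hx']
      exact Submodule.smul_mem _ _ (Submodule.subset_span hx)
    exact hfin
end

section
/- Let A be a commutative Noetherian ring, I ⊆ A an ideal, M a finitely generated A-module, and i ≥ 1. Then the pro abelian group {Tor_i^A(M, A/I^s)}_s vanishes; explicitly, for every s ≥ 1 there exists t ≥ s such that the homomorphism Tor_i^A(M, A/I^t) → Tor_i^A(M, A/I^s) induced by the canonical surjection A/I^t → A/I^s is the zero map. -/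
open CategoryTheory

universe u

namespace TorProVanishingAux

open MonoidalCategory TensorProduct LinearMap

section Criterion

variable {R : Type u} [Ring R]

lemma shortComplex_homologyMap_eq_zero {S₁ S₂ : ShortComplex (ModuleCat.{u} R)}
    (φ : S₁ ⟶ S₂)
    (h : ∀ x : S₁.X₂, S₁.g x = 0 → ∃ y : S₂.X₁, S₂.f y = φ.τ₂ x) :
    ShortComplex.homologyMap φ = 0 := by
  have hmem : ∀ x ∈ LinearMap.ker S₁.g.hom, φ.τ₂ x ∈ LinearMap.ker S₂.g.hom := by
    intro x hx
    have h23 := LinearMap.congr_fun (congrArg ModuleCat.Hom.hom φ.comm₂₃) x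
    simp only [ModuleCat.hom_comp, LinearMap.comp_apply] at h23
    simp only [LinearMap.mem_ker] at hx ⊢
    rw [h23, hx, map_zero]
  let γ : ShortComplex.LeftHomologyMapData φ S₁.moduleCatLeftHomologyData
      S₂.moduleCatLeftHomologyData :=
    { φK := ModuleCat.ofHom (φ.τ₂.hom.restrict hmem)
      φH := 0
      commi := by ext x; rfl
      commf' := by
        ext x
        apply Subtype.ext
        have h12 := LinearMap.congr_fun (congrArg ModuleCat.Hom.hom φ.comm₁₂) x
        simp only [ModuleCat.hom_comp, LinearMap.comp_apply] at h12
        exact h12.symm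
      commπ := by
        ext x
        simp only [ModuleCat.hom_comp, LinearMap.comp_apply, ModuleCat.hom_zero, LinearMap.zero_apply]
        symm
        erw [Submodule.Quotient.mk_eq_zero]
        obtain ⟨y, hy⟩ := h x.1 x.2
        exact ⟨y, Subtype.ext hy⟩ }
  have hφH : γ.φH = 0 := rfl
  rw [γ.homologyMap_eq, hφH]
  simp

lemma chain_homologyMap_eq_zero {K L : ChainComplex (ModuleCat.{u} R) ℕ}
    (φ : K ⟶ L) (n : ℕ)
    (h : ∀ x : K.X (n+1), K.d (n+1) n x = 0 →
      ∃ y : L.X (n+2), L.d (n+2) (n+1) y = φ.f (n+1) x) :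
    HomologicalComplex.homologyMap φ (n+1) = 0 := by
  have e1 : (ComplexShape.down ℕ).prev (n+1) = n+2 := by
    simp [ChainComplex.prev]
  have e2 : (ComplexShape.down ℕ).next (n+1) = n := ChainComplex.next_nat_succ n
  let α := HomologicalComplex.natIsoSc' (ModuleCat.{u} R) (ComplexShape.down ℕ)
    (n+2) (n+1) n e1 e2
  have hnat : (HomologicalComplex.shortComplexFunctor (ModuleCat.{u} R) _ (n+1)).map φ =
      α.hom.app K ≫ (HomologicalComplex.shortComplexFunctor' (ModuleCat.{u} R) _
        (n+2) (n+1) n).map φ ≫ α.inv.app L := by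
    rw [← α.hom.naturality_assoc φ]
    simp
  have hmid : ShortComplex.homologyMap
      ((HomologicalComplex.shortComplexFunctor' (ModuleCat.{u} R) _ (n+2) (n+1) n).map φ) = 0 :=
    shortComplex_homologyMap_eq_zero _ h
  show ShortComplex.homologyMap _ = 0
  rw [hnat, ShortComplex.homologyMap_comp, ShortComplex.homologyMap_comp, hmid]
  simp
  rfl

end Criterion

section Tensor

variable {A : Type u} [CommRing A]

/-- commuting `rTensor` and `lTensor` applications -/
lemma rT_lT_comm {M N P Q : Type u} [AddCommGroup M] [AddCommGroup N] [AddCommGroup P]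
    [AddCommGroup Q] [Module A M] [Module A N] [Module A P] [Module A Q]
    (f : M →ₗ[A] N) (g : P →ₗ[A] Q) (x : M ⊗[A] P) :
    rTensor Q f (lTensor M g x) = lTensor N g (rTensor P f x) := by
  rw [← LinearMap.comp_apply, ← LinearMap.comp_apply, rTensor_comp_lTensor,
    lTensor_comp_rTensor]

lemma lT_lT {M N₁ N₂ N₃ N₂' : Type u} [AddCommGroup M] [AddCommGroup N₁] [AddCommGroup N₂]
    [AddCommGroup N₃] [AddCommGroup N₂'] [Module A M] [Module A N₁] [Module A N₂]
    [Module A N₃] [Module A N₂']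
    (f₁ : N₁ →ₗ[A] N₂) (f₂ : N₂ →ₗ[A] N₃) (g₁ : N₁ →ₗ[A] N₂') (g₂ : N₂' →ₗ[A] N₃)
    (h : ∀ x, f₂ (f₁ x) = g₂ (g₁ x)) (y : M ⊗[A] N₁) :
    lTensor M f₂ (lTensor M f₁ y) = lTensor M g₂ (lTensor M g₁ y) := by
  rw [← LinearMap.comp_apply, ← lTensor_comp, ← LinearMap.comp_apply, ← lTensor_comp]
  exact DFunLike.congr_fun (congrArg (lTensor M) (LinearMap.ext h)) y

lemma lT_zero {M N₁ N₂ N₃ : Type u} [AddCommGroup M] [AddCommGroup N₁] [AddCommGroup N₂]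
    [AddCommGroup N₃] [Module A M] [Module A N₁] [Module A N₂] [Module A N₃]
    (f₁ : N₁ →ₗ[A] N₂) (f₂ : N₂ →ₗ[A] N₃)
    (h : ∀ x, f₂ (f₁ x) = 0) (y : M ⊗[A] N₁) :
    lTensor M f₂ (lTensor M f₁ y) = 0 := by
  rw [← LinearMap.comp_apply, ← lTensor_comp]
  have : f₂ ∘ₗ f₁ = 0 := LinearMap.ext h
  rw [this, lTensor_zero, LinearMap.zero_apply]

end Tensor

section Flat

variable {A : Type u} [CommRing A]

lemma flat_of (X : ModuleCat.{u} A) [h : Projective X] : Module.Flat A X := by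
  have : Module.Projective A X := by
    rw [IsProjective.iff_projective]
    exact h
  infer_instance

end Flat

section AR

variable {A : Type u} [CommRing A] [IsNoetherianRing A]

lemma ar_core (I : Ideal A) {Fr : Type u} [AddCommGroup Fr] [Module A Fr] [Module.Finite A Fr]
    (K : Submodule A Fr) (s : ℕ) :
    ∃ t, s ≤ t ∧ ∀ x₀ : K, (x₀ : Fr) ∈ (I ^ t • ⊤ : Submodule A Fr) →
      x₀ ∈ (I ^ s • ⊤ : Submodule A K) := by
  obtain ⟨k, hk⟩ := Ideal.exists_pow_inf_eq_pow_smul I K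
  refine ⟨s + k, Nat.le_add_right _ _, ?_⟩
  intro x₀ hx
  have h1 : (x₀ : Fr) ∈ (I ^ (s + k) • ⊤ : Submodule A Fr) ⊓ K := ⟨hx, x₀.2⟩
  rw [hk (s + k) (Nat.le_add_left _ _)] at h1
  have h2 : (x₀ : Fr) ∈ I ^ s • K := by
    have hle : I ^ (s + k - k) • ((I ^ k • ⊤ : Submodule A Fr) ⊓ K) ≤ I ^ s • K := by
      rw [Nat.add_sub_cancel]
      exact Submodule.smul_mono le_rfl inf_le_right
    exact hle h1
  have h3 : (I ^ s • K : Submodule A Fr) =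
      Submodule.map K.subtype (I ^ s • ⊤ : Submodule A K) := by
    rw [Submodule.map_smul'', Submodule.map_top, Submodule.range_subtype]
  rw [h3] at h2
  obtain ⟨y, hy, hyx⟩ := h2
  have : y = x₀ := Subtype.ext hyx
  rwa [← this]

/-- The canonical projection as a linear map. -/
noncomputable def prL (I : Ideal A) {s t : ℕ} (hts : s ≤ t) :
    (A ⧸ I ^ t) →ₗ[A] (A ⧸ I ^ s) :=
  Submodule.mapQ (I ^ t) (I ^ s) LinearMap.id
    (by rw [Submodule.comap_id]; exact Ideal.pow_le_pow_right hts)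

lemma ar_tensor (I : Ideal A) {Fr : Type u} [AddCommGroup Fr] [Module A Fr]
    [Module.Finite A Fr] (K : Submodule A Fr) (s : ℕ) :
    ∃ (t : ℕ) (hts : s ≤ t), ∀ x : (↥K) ⊗[A] (A ⧸ I ^ t),
      rTensor (A ⧸ I ^ t) K.subtype x = 0 → lTensor ↥K (prL I hts) x = 0 := by
  obtain ⟨t, hts, har⟩ := ar_core I K s
  refine ⟨t, hts, ?_⟩
  intro x hx
  obtain ⟨x', hx'⟩ := lTensor_surjective (↥K) (Submodule.mkQ_surjective (I ^ t)) x
  set x₀ := TensorProduct.rid A ↥K x' with hx₀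
  have hx'' : x' = x₀ ⊗ₜ[A] (1 : A) := by
    have := (TensorProduct.rid A ↥K).symm_apply_apply x'
    rw [← hx₀] at this  -- no-op
    rw [← this, TensorProduct.rid_symm_apply]
  have hxrep : x = x₀ ⊗ₜ[A] Submodule.Quotient.mk (1 : A) := by
    rw [← hx', hx'', lTensor_tmul]
    rfl
  have hmem : (x₀ : Fr) ∈ (I ^ t • ⊤ : Submodule A Fr) := by
    rw [hxrep] at hx
    rw [rTensor_tmul] at hx
    have := congrArg (tensorQuotEquivQuotSMul Fr (I ^ t)) hx
    rw [map_zero] at this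
    have h1 : tensorQuotEquivQuotSMul Fr (I ^ t)
        ((K.subtype x₀) ⊗ₜ[A] Submodule.Quotient.mk (1 : A)) =
        Submodule.Quotient.mk ((1 : A) • (K.subtype x₀)) :=
      tensorQuotEquivQuotSMul_tmul_mk (I ^ t) (K.subtype x₀) 1
    rw [h1, one_smul] at this
    exact (Submodule.Quotient.mk_eq_zero _).mp this
  have hK : x₀ ∈ (I ^ s • ⊤ : Submodule A K) := har x₀ hmem
  rw [hxrep, lTensor_tmul]
  have hpr1 : prL I hts (Submodule.Quotient.mk (1 : A)) = Submodule.Quotient.mk (1 : A) := by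
    rw [prL, Submodule.mapQ_apply, LinearMap.id_apply]
  rw [hpr1]
  have : tensorQuotEquivQuotSMul (↥K) (I ^ s)
      (x₀ ⊗ₜ[A] Submodule.Quotient.mk (1 : A)) = 0 := by
    have h1 : tensorQuotEquivQuotSMul (↥K) (I ^ s)
        (x₀ ⊗ₜ[A] Submodule.Quotient.mk (1 : A)) =
        Submodule.Quotient.mk ((1 : A) • x₀) :=
      tensorQuotEquivQuotSMul_tmul_mk (I ^ s) x₀ 1
    rw [h1, one_smul]
    exact (Submodule.Quotient.mk_eq_zero _).mpr hK
  exact (tensorQuotEquivQuotSMul (↥K) (I ^ s)).map_eq_zero_iff.mp this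

end AR

section Key

variable {A : Type u} [CommRing A] [IsNoetherianRing A]

set_option maxHeartbeats 1000000 in
lemma key (I : Ideal A) :
    ∀ (n : ℕ) (M : Type u) [AddCommGroup M] [Module A M] [Module.Finite A M] (s : ℕ),
    ∃ (t : ℕ) (hts : s ≤ t),
      ∀ (P : ProjectiveResolution (ModuleCat.of A (A ⧸ I ^ t)))
        (Q : ProjectiveResolution (ModuleCat.of A (A ⧸ I ^ s)))
        (g : P.complex ⟶ Q.complex),
        (g ≫ Q.π = P.π ≫ (ChainComplex.single₀ (ModuleCat.{u} A)).map
            (ModuleCat.ofHom (prL I hts))) →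
        ∀ (z : M ⊗[A] (P.complex.X (n+1))),
          lTensor M (P.complex.d (n+1) n).hom z = 0 →
          ∃ w : M ⊗[A] (Q.complex.X (n+2)),
            lTensor M (Q.complex.d (n+2) (n+1)).hom w = lTensor M (g.f (n+1)).hom z := by
  intro n
  induction n with
  | zero =>
    intro M _ _ _ s
    obtain ⟨m, e, he⟩ := Module.Finite.exists_fin' A M
    obtain ⟨t, hts, har⟩ := ar_tensor I (LinearMap.ker e) s
    refine ⟨t, hts, ?_⟩
    intro P Q g hg z hz
    set K := LinearMap.ker e with hKdef
    set Fr := (Fin m → A) with hFrdef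
    let πP : P.complex.X 0 →ₗ[A] (A ⧸ I ^ t) := (P.π.f 0).hom
    let πQ : Q.complex.X 0 →ₗ[A] (A ⧸ I ^ s) := (Q.π.f 0).hom
    -- degree-0 commutation
    have hg0 : ∀ x : P.complex.X 0, πQ (g.f 0 x) = prL I hts (πP x) := by
      intro x
      have h0 := HomologicalComplex.congr_hom hg 0
      rw [HomologicalComplex.comp_f, HomologicalComplex.comp_f,
        ChainComplex.single₀_map_f_zero] at h0
      exact LinearMap.congr_fun (congrArg ModuleCat.Hom.hom h0) x
    have hcomm10 : ∀ x, Q.complex.d 1 0 (g.f 1 x) = g.f 0 (P.complex.d 1 0 x) := by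
      intro x
      exact LinearMap.congr_fun (congrArg ModuleCat.Hom.hom (g.comm 1 0)) x
    have hπPd : ∀ x, πP (P.complex.d 1 0 x) = 0 := by
      intro x
      exact LinearMap.congr_fun (congrArg ModuleCat.Hom.hom P.complex_d_comp_π_f_zero) x
    -- lift z to the free module
    obtain ⟨y, hy⟩ := rTensor_surjective (P.complex.X 1) he z
    have ha : rTensor (P.complex.X 0) e (lTensor Fr (P.complex.d 1 0).hom y) = 0 := by
      rw [rT_lT_comm, hy, hz]
    have hexKe : Function.Exact (rTensor (P.complex.X 0) K.subtype)
        (rTensor (P.complex.X 0) e) :=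
      rTensor_exact (P.complex.X 0) (LinearMap.exact_subtype_ker_map e) he
    obtain ⟨b, hb⟩ := (hexKe _).mp ha
    -- the Artin-Rees argument
    have hx0 : rTensor (A ⧸ I ^ t) K.subtype (lTensor ↥K πP b) = 0 := by
      rw [rT_lT_comm, hb]
      exact lT_zero (P.complex.d 1 0).hom πP hπPd y
    have h6 : lTensor ↥K πQ (lTensor ↥K (g.f 0).hom b) = 0 := by
      rw [lT_lT (g.f 0).hom πQ πP (prL I hts) hg0 b]
      exact har _ hx0
    have hsurjQ : Function.Surjective πQ :=
      (ModuleCat.epi_iff_surjective (Q.π.f 0)).mp inferInstance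
    have hexQ0 : Function.Exact (lTensor ↥K (Q.complex.d 1 0).hom) (lTensor ↥K πQ) :=
      lTensor_exact ↥K
        ((ShortComplex.ShortExact.moduleCat_exact_iff_function_exact _).1 Q.exact₀) hsurjQ
    obtain ⟨c, hc⟩ := (hexQ0 _).mp h6
    -- correct and conclude
    have h5 : lTensor Fr (Q.complex.d 1 0).hom (lTensor Fr (g.f 1).hom y) =
        rTensor (Q.complex.X 0) K.subtype (lTensor ↥K (g.f 0).hom b) := by
      calc lTensor Fr (Q.complex.d 1 0).hom (lTensor Fr (g.f 1).hom y)
          = lTensor Fr (g.f 0).hom (lTensor Fr (P.complex.d 1 0).hom y) :=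
            lT_lT (g.f 1).hom (Q.complex.d 1 0).hom (P.complex.d 1 0).hom (g.f 0).hom hcomm10 y
        _ = lTensor Fr (g.f 0).hom (rTensor (P.complex.X 0) K.subtype b) := by rw [hb]
        _ = rTensor (Q.complex.X 0) K.subtype (lTensor ↥K (g.f 0).hom b) :=
            (rT_lT_comm _ _ _).symm
    have h9 : lTensor Fr (Q.complex.d 1 0).hom
        (lTensor Fr (g.f 1).hom y - rTensor (Q.complex.X 1) K.subtype c) = 0 := by
      rw [map_sub, h5, ← rT_lT_comm, hc, sub_self]
    have hexQ1 : Function.Exact (lTensor Fr (Q.complex.d 2 1).hom)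
        (lTensor Fr (Q.complex.d 1 0).hom) :=
      Module.Flat.lTensor_exact Fr
        ((ShortComplex.ShortExact.moduleCat_exact_iff_function_exact _).1 (Q.exact_succ 0))
    obtain ⟨w', hw'⟩ := (hexQ1 _).mp h9
    refine ⟨rTensor (Q.complex.X 2) e w', ?_⟩
    have hsub0 : rTensor (Q.complex.X 1) e (rTensor (Q.complex.X 1) K.subtype c) = 0 := by
      rw [← LinearMap.comp_apply, ← rTensor_comp]
      have h0 : e ∘ₗ K.subtype = 0 := by ext x; exact x.2
      rw [h0, rTensor_zero, LinearMap.zero_apply]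
    calc lTensor M (Q.complex.d 2 1).hom (rTensor (Q.complex.X 2) e w')
        = rTensor (Q.complex.X 1) e (lTensor Fr (Q.complex.d 2 1).hom w') :=
          (rT_lT_comm _ _ _).symm
      _ = rTensor (Q.complex.X 1) e
            (lTensor Fr (g.f 1).hom y - rTensor (Q.complex.X 1) K.subtype c) := by rw [hw']
      _ = rTensor (Q.complex.X 1) e (lTensor Fr (g.f 1).hom y) := by
          rw [map_sub, hsub0, sub_zero]
      _ = lTensor M (g.f 1).hom z := by rw [rT_lT_comm, hy]
  | succ n ih =>
    intro M _ _ _ s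
    obtain ⟨m, e, he⟩ := Module.Finite.exists_fin' A M
    obtain ⟨t, hts, hkeyK⟩ := ih ↥(LinearMap.ker e) s
    refine ⟨t, hts, ?_⟩
    intro P Q g hg z hz
    set K := LinearMap.ker e with hKdef
    set Fr := (Fin m → A) with hFrdef
    have hcommQ : ∀ x, Q.complex.d (n+2) (n+1) (g.f (n+2) x) =
        g.f (n+1) (P.complex.d (n+2) (n+1) x) := by
      intro x
      exact LinearMap.congr_fun (congrArg ModuleCat.Hom.hom (g.comm (n+2) (n+1))) x
    have hdd : ∀ x : P.complex.X (n+2),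
        P.complex.d (n+1) n (P.complex.d (n+2) (n+1) x) = 0 := by
      intro x
      exact LinearMap.congr_fun (congrArg ModuleCat.Hom.hom (P.complex.d_comp_d (n+2) (n+1) n)) x
    -- lift z to the free module
    obtain ⟨y, hy⟩ := rTensor_surjective (P.complex.X (n+2)) he z
    have ha : rTensor (P.complex.X (n+1)) e
        (lTensor Fr (P.complex.d (n+2) (n+1)).hom y) = 0 := by
      rw [rT_lT_comm, hy, hz]
    have hexKe : Function.Exact (rTensor (P.complex.X (n+1)) K.subtype)
        (rTensor (P.complex.X (n+1)) e) :=
      rTensor_exact (P.complex.X (n+1)) (LinearMap.exact_subtype_ker_map e) he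
    obtain ⟨b, hb⟩ := (hexKe _).mp ha
    -- b is a cycle
    have hflat : Module.Flat A (P.complex.X n) := flat_of _
    have hbz : lTensor ↥K (P.complex.d (n+1) n).hom b = 0 := by
      apply Module.Flat.rTensor_preserves_injective_linearMap
        (M := P.complex.X n) K.subtype K.injective_subtype
      rw [map_zero, rT_lT_comm, hb]
      exact lT_zero (P.complex.d (n+2) (n+1)).hom (P.complex.d (n+1) n).hom hdd y
    obtain ⟨c, hc⟩ := hkeyK P Q g hg b hbz
    -- correct and conclude
    have h5 : lTensor Fr (Q.complex.d (n+2) (n+1)).hom (lTensor Fr (g.f (n+2)).hom y) =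
        rTensor (Q.complex.X (n+1)) K.subtype (lTensor ↥K (g.f (n+1)).hom b) := by
      calc lTensor Fr (Q.complex.d (n+2) (n+1)).hom (lTensor Fr (g.f (n+2)).hom y)
          = lTensor Fr (g.f (n+1)).hom (lTensor Fr (P.complex.d (n+2) (n+1)).hom y) :=
            lT_lT (g.f (n+2)).hom (Q.complex.d (n+2) (n+1)).hom (P.complex.d (n+2) (n+1)).hom
              (g.f (n+1)).hom hcommQ y
        _ = lTensor Fr (g.f (n+1)).hom (rTensor (P.complex.X (n+1)) K.subtype b) := by rw [hb]
        _ = rTensor (Q.complex.X (n+1)) K.subtype (lTensor ↥K (g.f (n+1)).hom b) :=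
            (rT_lT_comm _ _ _).symm
    have h9 : lTensor Fr (Q.complex.d (n+2) (n+1)).hom
        (lTensor Fr (g.f (n+2)).hom y - rTensor (Q.complex.X (n+2)) K.subtype c) = 0 := by
      rw [map_sub, h5, ← rT_lT_comm, hc, sub_self]
    have hexQ1 : Function.Exact (lTensor Fr (Q.complex.d (n+3) (n+2)).hom)
        (lTensor Fr (Q.complex.d (n+2) (n+1)).hom) :=
      Module.Flat.lTensor_exact Fr
        ((ShortComplex.ShortExact.moduleCat_exact_iff_function_exact _).1 (Q.exact_succ (n+1)))
    obtain ⟨w', hw'⟩ := (hexQ1 _).mp h9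
    refine ⟨rTensor (Q.complex.X (n+3)) e w', ?_⟩
    have hsub0 : rTensor (Q.complex.X (n+2)) e
        (rTensor (Q.complex.X (n+2)) K.subtype c) = 0 := by
      rw [← LinearMap.comp_apply, ← rTensor_comp]
      have h0 : e ∘ₗ K.subtype = 0 := by ext x; exact x.2
      rw [h0, rTensor_zero, LinearMap.zero_apply]
    calc lTensor M (Q.complex.d (n+3) (n+2)).hom (rTensor (Q.complex.X (n+3)) e w')
        = rTensor (Q.complex.X (n+2)) e (lTensor Fr (Q.complex.d (n+3) (n+2)).hom w') :=
          (rT_lT_comm _ _ _).symm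
      _ = rTensor (Q.complex.X (n+2)) e
            (lTensor Fr (g.f (n+2)).hom y - rTensor (Q.complex.X (n+2)) K.subtype c) := by
          rw [hw']
      _ = rTensor (Q.complex.X (n+2)) e (lTensor Fr (g.f (n+2)).hom y) := by
          rw [map_sub, hsub0, sub_zero]
      _ = lTensor M (g.f (n+2)).hom z := by rw [rT_lT_comm, hy]

end Key

end TorProVanishingAux


/-- (Artin–Rees vanishing for Tor) Let `A` be a commutative Noetherian ring, `I ⊆ A` an
ideal, `M` a finitely generated `A`-module, and `i ≥ 1`.  Then the pro abelian group
`{Tor_i^A(M, A/I^s)}_s` vanishes: for every `s ≥ 1` there exists `t ≥ s` such that the map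
`Tor_i^A(M, A/I^t) → Tor_i^A(M, A/I^s)` induced by the canonical surjection
`A/I^t → A/I^s` is zero. -/
theorem tor_pro_vanishing (A : Type u) [CommRing A] [IsNoetherianRing A] (I : Ideal A)
    (M : Type u) [AddCommGroup M] [Module A M] [Module.Finite A M]
    (i : ℕ) (hi : 1 ≤ i) :
    ∀ s : ℕ, 1 ≤ s → ∃ t : ℕ, ∃ _hts : s ≤ t,
      ((Tor (ModuleCat.{u} A) i).obj (ModuleCat.of A M)).map
        (ModuleCat.ofHom (Submodule.mapQ (I ^ t) (I ^ s) LinearMap.id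
          (by rw [Submodule.comap_id]; exact Ideal.pow_le_pow_right ‹s ≤ t›))) = 0 := by
  intro s _hs
  obtain ⟨n, rfl⟩ : ∃ n, i = n + 1 := ⟨i - 1, (Nat.succ_pred_eq_of_pos hi).symm⟩
  obtain ⟨t, hts, hkey⟩ := TorProVanishingAux.key I n M s
  refine ⟨t, hts, ?_⟩
  let F := (MonoidalCategory.tensoringLeft (ModuleCat.{u} A)).obj (ModuleCat.of A M)
  let P : ProjectiveResolution (ModuleCat.of A (A ⧸ I ^ t)) :=
    (HasProjectiveResolution.out (Z := ModuleCat.of A (A ⧸ I ^ t))).some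
  let Q : ProjectiveResolution (ModuleCat.of A (A ⧸ I ^ s)) :=
    (HasProjectiveResolution.out (Z := ModuleCat.of A (A ⧸ I ^ s))).some
  let fm : ModuleCat.of A (A ⧸ I ^ t) ⟶ ModuleCat.of A (A ⧸ I ^ s) :=
    ModuleCat.ofHom (TorProVanishingAux.prL I hts)
  let g := ProjectiveResolution.lift fm P Q
  have hcomm := ProjectiveResolution.lift_commutes fm P Q
  have hmap0 : (F.leftDerived (n+1)).map fm = 0 := by
    rw [Functor.leftDerived_map_eq F (n+1) fm g hcomm]
    have hmid : HomologicalComplex.homologyMap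
        ((F.mapHomologicalComplex (ComplexShape.down ℕ)).map g) (n+1) = 0 := by
      apply TorProVanishingAux.chain_homologyMap_eq_zero
      intro x hx
      exact hkey P Q g hcomm x hx
    have heq : (F.mapHomologicalComplex (ComplexShape.down ℕ) ⋙
        HomologicalComplex.homologyFunctor (ModuleCat.{u} A) (ComplexShape.down ℕ) (n+1)).map g =
        HomologicalComplex.homologyMap
          ((F.mapHomologicalComplex (ComplexShape.down ℕ)).map g) (n+1) := rfl
    rw [heq, hmid]
    simp
    exact Limits.zero_comp
  have hfin : ((Tor (ModuleCat.{u} A) (n+1)).obj (ModuleCat.of A M)).map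
      (ModuleCat.ofHom (Submodule.mapQ (I ^ t) (I ^ s) LinearMap.id
        (by rw [Submodule.comap_id]; exact Ideal.pow_le_pow_right hts))) =
      (F.leftDerived (n+1)).map fm := by
    rfl
  rw [hfin]
  exact hmap0
end

section
/- Let p be a prime and let A be a Noetherian, F-finite Z_(p)-algebra. Then for every r ≥ 1 the ring W_r(A) of p-typical Witt vectors of length r over A is Noetherian. -/
open Function



/-- Transfer Noetherianity between scalar actions: if every `B`-scalar action on `M` can be
realized by a `Λ`-scalar, then Noetherianity of `M` over `B` implies it over `Λ`. -/
theorem isNoetherian_of_smul_realize {B Λ M : Type*} [Semiring B] [Semiring Λ]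
    [AddCommMonoid M] [Module B M] [Module Λ M] [IsNoetherian B M]
    (h : ∀ b : B, ∃ x : Λ, ∀ m : M, b • m = x • m) : IsNoetherian Λ M := by
  rw [isNoetherian_iff']
  let e : Submodule Λ M → Submodule B M := fun N =>
    { carrier := N
      add_mem' := fun ha hb => N.add_mem ha hb
      zero_mem' := N.zero_mem
      smul_mem' := fun b m hm => by
        obtain ⟨x, hx⟩ := h b
        rw [hx]
        exact N.smul_mem x hm }
  have he : ∀ N N' : Submodule Λ M, e N ≤ e N' ↔ N ≤ N' :=
    fun N N' => ⟨fun h x hx => h hx, fun h x hx => h hx⟩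
  exact (OrderEmbedding.ofMapLEIff e he).wellFoundedGT



theorem formanek_aux {R M : Type*} [CommRing R] [AddCommGroup M] [Module R M]
    (hfg : (⊤ : Submodule R M).FG)
    (P1 : ∀ I : Ideal R, I • (⊤ : Submodule R M) ≠ ⊥ →
      IsNoetherian R (M ⧸ I • (⊤ : Submodule R M))) :
    IsNoetherian R M := by
  classical
  by_contra hM
  obtain ⟨s, hs⟩ := hfg
  set 𝒮 : Set (Submodule R M) :=
    {N | ∀ r : R, (∀ m : M, r • m ∈ N) → ∀ m : M, r • m = 0} with h𝒮
  -- Zorn's lemma gives a maximal `N₀`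
  have hubs : ∀ c ⊆ 𝒮, IsChain (· ≤ ·) c → ∀ y ∈ c, ∃ ub ∈ 𝒮, ∀ z ∈ c, z ≤ ub := by
    intro c hc hchain y hy
    refine ⟨sSup c, ?_, fun z hz => le_sSup hz⟩
    intro r hr
    -- find a common member of the chain containing all `r • g`, `g ∈ s`
    have hmem : ∀ m : M, ∃ N ∈ c, r • m ∈ N := by
      intro m
      haveI : Nonempty c := ⟨⟨y, hy⟩⟩
      have := hr m
      rw [sSup_eq_iSup', Submodule.mem_iSup_of_directed _ hchain.directed] at this
      obtain ⟨⟨N, hN⟩, h⟩ := this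
      exact ⟨N, hN, h⟩
    have hfin : ∀ t : Finset M, ∃ N ∈ c, ∀ g ∈ t, r • g ∈ N := by
      intro t
      induction t using Finset.induction_on with
      | empty => exact ⟨y, hy, by simp⟩
      | @insert a t ha ih =>
        obtain ⟨N, hN, hN'⟩ := ih
        obtain ⟨N', hN'c, hN''⟩ := hmem a
        obtain hle | hle := hchain.total hN hN'c
        · exact ⟨N', hN'c, fun g hg => by
            rcases Finset.mem_insert.1 hg with rfl | hg
            · exact hN''
            · exact hle (hN' g hg)⟩
        · exact ⟨N, hN, fun g hg => by
            rcases Finset.mem_insert.1 hg with rfl | hg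
            · exact hle hN''
            · exact hN' g hg⟩
    obtain ⟨N, hNc, hN⟩ := hfin s
    have hall : ∀ m : M, r • m ∈ N := by
      intro m
      have hm : m ∈ Submodule.span R (s : Set M) := by rw [hs]; trivial
      refine Submodule.span_induction (fun g hg => hN g hg) (by simp) ?_ ?_ hm
      · intro a b _ _ ha hb
        rw [smul_add]; exact N.add_mem ha hb
      · intro a x _ hx
        rw [smul_comm]; exact N.smul_mem a hx
    exact hc hNc r hall
  obtain ⟨N₀, -, hN₀S, hN₀max⟩ :=
    zorn_le_nonempty₀ 𝒮 hubs ⊥ (fun r hr m => by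
      have := hr m; simpa using (Submodule.mem_bot R).1 this)
  -- `N₀ ≠ ⊤`
  have hN₀ne : N₀ ≠ ⊤ := by
    rintro rfl
    have : ∀ m : M, m = 0 := by
      intro m
      have := hN₀S 1 (fun m => trivial) m
      simpa using this
    have : Subsingleton M := ⟨fun a b => by rw [this a, this b]⟩
    exact hM inferInstance
  -- every submodule strictly above `N₀` has Noetherian quotient
  have C1 : ∀ P : Submodule R M, N₀ < P → IsNoetherian R (M ⧸ P) := by
    intro P hP
    have hPnot : P ∉ 𝒮 := by
      intro hPS
      exact hP.ne' (le_antisymm (hN₀max hPS hP.le) hP.le)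
    rw [h𝒮, Set.mem_setOf_eq] at hPnot
    push_neg at hPnot
    obtain ⟨r, hrP, m₀, hm₀⟩ := hPnot
    set I : Ideal R := Ideal.span {r} with hI
    have hne : I • (⊤ : Submodule R M) ≠ ⊥ := by
      intro hbot
      apply hm₀
      have : r • m₀ ∈ I • (⊤ : Submodule R M) :=
        Submodule.smul_mem_smul (Ideal.subset_span rfl) trivial
      rw [hbot] at this
      exact (Submodule.mem_bot R).1 this
    have hle : I • (⊤ : Submodule R M) ≤ P := by
      refine Submodule.smul_le.2 fun r' hr' m _ => ?_
      obtain ⟨a, rfl⟩ := Ideal.mem_span_singleton'.1 hr'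
      rw [mul_smul]
      exact P.smul_mem a (hrP m)
    haveI := P1 I hne
    refine isNoetherian_of_surjective (Submodule.mapQ (I • ⊤) P LinearMap.id hle) ?_
    rw [LinearMap.range_eq_top]
    intro q
    obtain ⟨m, rfl⟩ := Submodule.Quotient.mk_surjective P q
    exact ⟨Submodule.Quotient.mk m, by rw [Submodule.mapQ_apply, LinearMap.id_apply]⟩
  -- every submodule of `M ⧸ N₀` is f.g.
  have C2 : ∀ Q : Submodule R (M ⧸ N₀), Q.FG := by
    intro Q
    by_cases hQ : Q = ⊥
    · rw [hQ]; exact Submodule.fg_bot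
    obtain ⟨x, hxQ, hx0⟩ := Q.ne_bot_iff.1 hQ
    set P : Submodule R M := Submodule.comap N₀.mkQ (Submodule.span R {x}) with hP
    have hNP : N₀ < P := by
      refine lt_of_le_of_ne (fun m hm => ?_) ?_
      · have h0 : N₀.mkQ m = 0 := (Submodule.Quotient.mk_eq_zero N₀).2 hm
        refine Submodule.mem_comap.2 ?_
        rw [h0]
        exact Submodule.zero_mem _
      · intro hEq
        obtain ⟨y, rfl⟩ := Submodule.Quotient.mk_surjective N₀ x
        have hyP : y ∈ P := Submodule.mem_comap.2
          (by rw [Submodule.mkQ_apply]; exact Submodule.mem_span_singleton_self _)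
        rw [← hEq] at hyP
        exact hx0 ((Submodule.Quotient.mk_eq_zero N₀).2 hyP)
    haveI := C1 P hNP
    have hmap : Submodule.map N₀.mkQ P = Submodule.span R {x} := by
      rw [hP, Submodule.map_comap_eq, Submodule.range_mkQ, top_inf_eq]
    haveI : IsNoetherian R ((M ⧸ N₀) ⧸ Submodule.map N₀.mkQ P) :=
      isNoetherian_of_linearEquiv
        (Submodule.quotientQuotientEquivQuotient N₀ P hNP.le).symm
    refine Submodule.fg_of_fg_map_of_fg_inf_ker (Submodule.map N₀.mkQ P).mkQ ?_ ?_
    · exact IsNoetherian.noetherian _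
    · rw [Submodule.ker_mkQ, hmap]
      have : Submodule.span R {x} ≤ Q := Submodule.span_le.2 (by simpa using hxQ)
      rw [inf_of_le_right this]
      exact Submodule.fg_span_singleton x
  have hQN : IsNoetherian R (M ⧸ N₀) := isNoetherian_def.2 C2
  -- conclude `M` is Noetherian, contradiction
  set θ : R →ₗ[R] (↥s → M ⧸ N₀) :=
    LinearMap.pi fun i : ↥s => LinearMap.toSpanSingleton R (M ⧸ N₀) (N₀.mkQ i) with hθ
  have hker : ∀ r ∈ LinearMap.ker θ, ∀ m : M, r • m = 0 := by
    intro r hr m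
    refine hN₀S r ?_ m
    intro m'
    have hm' : m' ∈ Submodule.span R (s : Set M) := by rw [hs]; trivial
    refine Submodule.span_induction (fun g hg => ?_) (by simp) ?_ ?_ hm'
    · have := congrFun ((LinearMap.mem_ker).1 hr) ⟨g, hg⟩
      simp only [hθ, LinearMap.pi_apply, LinearMap.toSpanSingleton_apply, Pi.zero_apply] at this
      rw [← map_smul] at this
      exact (Submodule.Quotient.mk_eq_zero N₀).1 this
    · intro a b _ _ ha hb
      rw [smul_add]; exact N₀.add_mem ha hb
    · intro a x _ hx
      rw [smul_comm]; exact N₀.smul_mem a hx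
  haveI : IsNoetherian R (↥s → M ⧸ N₀) := inferInstance
  haveI : IsNoetherian R (R ⧸ LinearMap.ker θ) :=
    isNoetherian_of_injective ((LinearMap.ker θ).liftQ θ le_rfl)
      (by rw [← LinearMap.ker_eq_bot, Submodule.ker_liftQ_eq_bot _ _ _ le_rfl])
  -- a surjection `(↥s → R ⧸ ker θ) →ₗ[R] M`
  set μ : ↥s → (R ⧸ LinearMap.ker θ) →ₗ[R] M := fun i =>
    (LinearMap.ker θ).liftQ (LinearMap.toSpanSingleton R M i)
      (fun r hr => by
        rw [LinearMap.mem_ker, LinearMap.toSpanSingleton_apply]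
        exact hker r hr i) with hμ
  set ρ : (↥s → R ⧸ LinearMap.ker θ) →ₗ[R] M :=
    ∑ i : ↥s, (μ i).comp (LinearMap.proj i) with hρ
  have hρsurj : LinearMap.range ρ = ⊤ := by
    rw [eq_top_iff, ← hs, Submodule.span_le]
    intro g hg
    refine ⟨Pi.single ⟨g, hg⟩ (Submodule.Quotient.mk 1), ?_⟩
    rw [hρ]
    rw [LinearMap.sum_apply]
    rw [Finset.sum_eq_single (⟨g, hg⟩ : ↥s)]
    · rw [LinearMap.comp_apply, LinearMap.proj_apply, Pi.single_eq_same]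
      show ((LinearMap.ker θ).liftQ (LinearMap.toSpanSingleton R M g) _)
        (Submodule.Quotient.mk 1) = g
      rw [Submodule.liftQ_apply, LinearMap.toSpanSingleton_apply, one_smul]
    · intro b _ hb
      simp [Pi.single_eq_of_ne hb]
    · simp
  exact hM (isNoetherian_of_surjective ρ hρsurj)

theorem formanek {R M : Type*} [CommRing R] [AddCommGroup M] [Module R M]
    (hfg : (⊤ : Submodule R M).FG)
    (hmax : ∀ Ω : Set (Submodule R M), Ω.Nonempty →
      (∀ N ∈ Ω, ∃ I : Ideal R, N = I • (⊤ : Submodule R M)) →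
      ∃ N ∈ Ω, ∀ N' ∈ Ω, ¬ N < N') :
    IsNoetherian R M := by
  classical
  by_contra hM
  set Ω : Set (Submodule R M) :=
    {N | (∃ I : Ideal R, N = I • (⊤ : Submodule R M)) ∧ ¬IsNoetherian R (M ⧸ N)} with hΩ
  have hbot : (⊥ : Submodule R M) ∈ Ω := by
    refine ⟨⟨⊥, by rw [Submodule.bot_smul]⟩, fun h => hM ?_⟩
    exact isNoetherian_of_linearEquiv (Submodule.quotEquivOfEqBot ⊥ rfl)
  obtain ⟨K, hKΩ, hKmax⟩ := hmax Ω ⟨⊥, hbot⟩ (fun N hN => hN.1)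
  obtain ⟨⟨I₀, hI₀⟩, hKn⟩ := hKΩ
  apply hKn
  have hfgq : (⊤ : Submodule R (M ⧸ K)).FG := by
    obtain ⟨s, hs⟩ := hfg
    exact ⟨s.image K.mkQ, by
      rw [Finset.coe_image, Submodule.span_image, hs, Submodule.map_top, Submodule.range_mkQ]⟩
  refine formanek_aux hfgq ?_
  intro I hI
  have hmapI : I • (⊤ : Submodule R (M ⧸ K)) = Submodule.map K.mkQ (I • ⊤) := by
    rw [Submodule.map_smul'', Submodule.map_top, Submodule.range_mkQ]
  have hform : (I ⊔ I₀) • (⊤ : Submodule R M) = I • ⊤ ⊔ K := by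
    rw [Submodule.sup_smul, hI₀]
  have hlt : K < (I ⊔ I₀) • (⊤ : Submodule R M) := by
    rw [hform]
    refine lt_of_le_of_ne le_sup_right ?_
    intro hEq
    apply hI
    have hle : I • (⊤ : Submodule R M) ≤ K := hEq ▸ le_sup_left
    rw [hmapI, eq_bot_iff]
    rintro x ⟨y, hy, rfl⟩
    rw [Submodule.mem_bot, Submodule.mkQ_apply]
    exact (Submodule.Quotient.mk_eq_zero K).2 (hle hy)
  have hnotin : (I ⊔ I₀) • (⊤ : Submodule R M) ∉ Ω := fun h => hKmax _ h hlt
  have hnoeth : IsNoetherian R (M ⧸ (I ⊔ I₀) • (⊤ : Submodule R M)) := by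
    by_contra h
    exact hnotin ⟨⟨I ⊔ I₀, rfl⟩, h⟩
  have hmap2 : Submodule.map K.mkQ ((I ⊔ I₀) • (⊤ : Submodule R M))
      = I • (⊤ : Submodule R (M ⧸ K)) := by
    rw [hform, Submodule.map_sup, hmapI]
    have : Submodule.map K.mkQ K = ⊥ := by
      rw [eq_bot_iff]
      rintro x ⟨y, hy, rfl⟩
      rw [Submodule.mem_bot, Submodule.mkQ_apply]
      exact (Submodule.Quotient.mk_eq_zero K).2 hy
    rw [this, sup_bot_eq]
  rw [← hmap2]
  exact isNoetherian_of_linearEquiv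
    (Submodule.quotientQuotientEquivQuotient K ((I ⊔ I₀) • ⊤) hlt.le).symm


namespace LZAux
open WittVector

variable {p : ℕ} [hp : Fact p.Prime] {A : Type*} [CommRing A]

theorem ghost_zero_coeff (x : WittVector p A) : ghostComponent 0 x = x.coeff 0 := by
  rw [ghostComponent_apply, wittPolynomial_zero, MvPolynomial.aeval_X]

theorem ghost_frob_iterate (n m : ℕ) (x : WittVector p A) :
    ghostComponent n (frobenius^[m] x) = ghostComponent (n + m) x := by
  induction m generalizing n x with
  | zero => rfl
  | succ k ih =>
    rw [Function.iterate_succ_apply, ih, ghostComponent_frobenius, Nat.add_assoc]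

theorem frob_iterate_coeff_zero (m : ℕ) (x : WittVector p A) :
    (frobenius^[m] x).coeff 0 = ghostComponent m x := by
  rw [← ghost_zero_coeff, ghost_frob_iterate, Nat.zero_add]

theorem vIter_coeff_lt {m i : ℕ} (h : i < m) (x : WittVector p A) :
    ((⇑(verschiebung (p := p) (R := A)))^[m] x).coeff i = 0 := by
  induction m generalizing i x with
  | zero => omega
  | succ k ih =>
    rw [Function.iterate_succ_apply']
    rcases i with _ | j
    · exact verschiebung_coeff_zero _
    · rw [verschiebung_coeff_succ]
      exact ih (by omega) x

theorem vIter_coeff_self (m : ℕ) (x : WittVector p A) :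
    ((⇑(verschiebung (p := p) (R := A)))^[m] x).coeff m = x.coeff 0 := by
  have := iterate_verschiebung_coeff x m 0
  rwa [Nat.zero_add] at this

theorem vIter_add (m : ℕ) (x y : WittVector p A) :
    (⇑(verschiebung (p := p) (R := A)))^[m] (x + y)
      = (⇑verschiebung)^[m] x + (⇑verschiebung)^[m] y := by
  induction m generalizing x y with
  | zero => rfl
  | succ k ih =>
    rw [Function.iterate_succ_apply, map_add, ih,
      ← Function.iterate_succ_apply, ← Function.iterate_succ_apply]

theorem vIter_sub (m : ℕ) (x y : WittVector p A) :
    (⇑(verschiebung (p := p) (R := A)))^[m] (x - y)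
      = (⇑verschiebung)^[m] x - (⇑verschiebung)^[m] y := by
  induction m generalizing x y with
  | zero => rfl
  | succ k ih =>
    rw [Function.iterate_succ_apply, map_sub, ih,
      ← Function.iterate_succ_apply, ← Function.iterate_succ_apply]

theorem coeff_zero_add (u v : WittVector p A) :
    (u + v).coeff 0 = u.coeff 0 + v.coeff 0 := by
  rw [← ghost_zero_coeff, ← ghost_zero_coeff, ← ghost_zero_coeff, map_add]

theorem coeff_zero_mul (u v : WittVector p A) :
    (u * v).coeff 0 = u.coeff 0 * v.coeff 0 := by
  rw [← ghost_zero_coeff, ← ghost_zero_coeff, ← ghost_zero_coeff, map_mul]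

theorem ghost_vIter (m : ℕ) (x : WittVector p A) :
    ghostComponent m ((⇑(verschiebung (p := p) (R := A)))^[m] x)
      = (p : A) ^ m * ghostComponent 0 x := by
  induction m generalizing x with
  | zero => simp
  | succ k ih =>
    rw [Function.iterate_succ_apply', ghostComponent_verschiebung, ih, pow_succ]
    ring

theorem mul_vIter (m : ℕ) (x y : WittVector p A) :
    x * (⇑(verschiebung (p := p) (R := A)))^[m] y
      = (⇑verschiebung)^[m] (frobenius^[m] x * y) := by
  rw [mul_comm, iterate_verschiebung_mul_left, mul_comm]

theorem trunc_vIter {m : ℕ} {u v : WittVector p A} (h : u.coeff 0 = v.coeff 0) :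
    WittVector.truncate (m + 1) ((⇑(verschiebung (p := p) (R := A)))^[m] u)
      = WittVector.truncate (m + 1) ((⇑verschiebung)^[m] v) := by
  rw [← sub_eq_zero, ← map_sub, ← vIter_sub]
  have hm : (⇑(verschiebung (p := p) (R := A)))^[m] (u - v) ∈
      RingHom.ker (WittVector.truncate (p := p) (R := A) (m + 1)) := by
    rw [mem_ker_truncate]
    intro i hi
    rcases Nat.lt_or_ge i m with hlt | hge
    · exact vIter_coeff_lt hlt _
    · have : i = m := by omega
      subst this
      rw [vIter_coeff_self]
      rw [← ghost_zero_coeff, map_sub, ghost_zero_coeff, ghost_zero_coeff, h, sub_self]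
  exact (RingHom.mem_ker).1 hm

end LZAux

open WittVector in
theorem LZAux.key (p : ℕ) [Fact p.Prime] (A : Type*) [CommRing A] [IsNoetherianRing A]
    (hFF : IsFFinite p (A ⧸ Ideal.span {(p : A)})) :
    ∀ r : ℕ, IsNoetherianRing (TruncatedWittVector p r A) := by
  intro r
  induction r with
  | zero =>
    haveI : Subsingleton (TruncatedWittVector p 0 A) :=
      ⟨fun a b => TruncatedWittVector.ext (fun i => i.elim0)⟩
    exact isNoetherianRing_iff.2 inferInstance
  | succ m IH =>
    classical
    letI instr : Module (WittVector p A) (TruncatedWittVector p (m + 1) A) :=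
      Module.compHom _ (WittVector.truncate (p := p) (R := A) (m + 1))
    letI instm : Module (WittVector p A) (TruncatedWittVector p m A) :=
      Module.compHom _ (WittVector.truncate (p := p) (R := A) m)
    letI instA : Module (WittVector p A) A :=
      Module.compHom A (WittVector.ghostComponent (p := p) (R := A) m)
    set S : Subring A := (WittVector.ghostComponent (p := p) (R := A) m).range with hS
    -- elements of S
    have hpm_mem : ∀ a : A, a ^ p ^ m ∈ S := fun a =>
      ⟨WittVector.teichmuller p a, WittVector.ghostComponent_teichmuller (p := p) a m⟩
    have hpk_mem : ∀ k : ℕ, ((p : A)) ^ k ∈ S := fun k =>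
      ⟨((p : ℕ) : WittVector p A) ^ k, by rw [map_pow, map_natCast]⟩
    have hpmmul_mem : ∀ c : A, (p : A) ^ m * c ∈ S := fun c =>
      ⟨(⇑WittVector.verschiebung)^[m] (WittVector.teichmuller p c), by
        rw [LZAux.ghost_vIter, LZAux.ghost_zero_coeff, WittVector.teichmuller_coeff_zero]⟩
    -- F-finiteness data
    obtain ⟨f, hf, hffin⟩ := hFF
    have hfm : ∀ k : ℕ, ∃ g : (A ⧸ Ideal.span {(p : A)}) →+* (A ⧸ Ideal.span {(p : A)}),
        (∀ x, g x = x ^ p ^ k) ∧ g.Finite := by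
      intro k
      induction k with
      | zero => exact ⟨RingHom.id _, by simp, RingHom.Finite.id _⟩
      | succ n ih =>
        obtain ⟨g, hg, hgfin⟩ := ih
        refine ⟨g.comp f, fun x => ?_, RingHom.Finite.comp hgfin hffin⟩
        rw [RingHom.comp_apply, hf, hg, ← pow_mul, pow_succ']
    obtain ⟨fm, hfmx, hfmfin⟩ := hfm m
    have hgen : ∃ t : Finset (A ⧸ Ideal.span {(p : A)}),
        ∀ x : A ⧸ Ideal.span {(p : A)},
          ∃ c : (A ⧸ Ideal.span {(p : A)}) → (A ⧸ Ideal.span {(p : A)}),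
            ∑ i ∈ t, (c i) ^ p ^ m * i = x := by
      letI : Algebra (A ⧸ Ideal.span {(p : A)}) (A ⧸ Ideal.span {(p : A)}) := fm.toAlgebra
      letI : Module (A ⧸ Ideal.span {(p : A)}) (A ⧸ Ideal.span {(p : A)}) := Algebra.toModule
      have hMF : Module.Finite (A ⧸ Ideal.span {(p : A)}) (A ⧸ Ideal.span {(p : A)}) := hfmfin
      obtain ⟨t, ht⟩ := hMF.fg_top
      refine ⟨t, fun x => ?_⟩
      have hx : x ∈ Submodule.span (A ⧸ Ideal.span {(p : A)}) (↑t : Set _) := by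
        rw [ht]; exact Submodule.mem_top
      obtain ⟨c, -, hc⟩ := Submodule.mem_span_finset.1 hx
      refine ⟨c, ?_⟩
      rw [← hc]
      refine Finset.sum_congr rfl fun i _ => ?_
      rw [Algebra.smul_def, RingHom.algebraMap_toAlgebra, hfmx]
    obtain ⟨t, hgen⟩ := hgen
    have hπ : Function.Surjective (Ideal.Quotient.mk (Ideal.span {(p : A)})) :=
      Ideal.Quotient.mk_surjective
    set G : Finset A := t.image (Function.surjInv hπ) with hG
    set N : Submodule S A := Submodule.span S (insert (1 : A) (↑G : Set A)) with hN
    have step1 : ∀ c : A, ∃ n ∈ N, ∃ d : A, c = n + (p : A) * d := by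
      intro c
      obtain ⟨cf, hcf⟩ := hgen (Ideal.Quotient.mk _ c)
      set n₁ : A := ∑ i ∈ t.attach,
        Function.surjInv hπ (cf i.1) ^ p ^ m * Function.surjInv hπ i.1 with hn₁
      have hπn₁ : Ideal.Quotient.mk (Ideal.span {(p : A)}) n₁ = Ideal.Quotient.mk _ c := by
        rw [hn₁, map_sum, ← hcf,
          ← Finset.sum_attach t (fun i => (cf i) ^ p ^ m * i)]
        refine Finset.sum_congr rfl fun i _ => ?_
        rw [map_mul, map_pow, Function.surjInv_eq hπ, Function.surjInv_eq hπ]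
      have hsub : c - n₁ ∈ Ideal.span {(p : A)} := Ideal.Quotient.eq.1 hπn₁.symm
      obtain ⟨d, hd⟩ := Ideal.mem_span_singleton'.1 hsub
      refine ⟨n₁, ?_, d, by rw [mul_comm] at hd; rw [hd]; ring⟩
      refine Submodule.sum_mem _ fun i _ => ?_
      have hgmem : Function.surjInv hπ i.1 ∈ insert (1 : A) (↑G : Set A) :=
        Set.mem_insert_of_mem _ (Finset.mem_coe.2 (Finset.mem_image_of_mem _ i.2))
      exact Submodule.smul_mem N (⟨_, hpm_mem (Function.surjInv hπ (cf i.1))⟩ : S)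
        (Submodule.subset_span hgmem)
    have stepk : ∀ k : ℕ, ∀ c : A, ∃ n ∈ N, ∃ d : A, c = n + (p : A) ^ k * d := by
      intro k
      induction k with
      | zero => exact fun c => ⟨0, N.zero_mem, c, by simp⟩
      | succ k ih =>
        intro c
        obtain ⟨n, hn, d, hd⟩ := ih c
        obtain ⟨n', hn', d', hd'⟩ := step1 d
        refine ⟨n + (p : A) ^ k * n', N.add_mem hn ?_, d', ?_⟩
        · exact Submodule.smul_mem N (⟨_, hpk_mem k⟩ : S) hn'
        · rw [hd, hd']; ring
    have hfgS : (⊤ : Submodule S A).FG := by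
      refine ⟨insert (1 : A) G, ?_⟩
      rw [Finset.coe_insert]
      refine le_antisymm le_top ?_
      intro a _
      obtain ⟨n, hn, d, hd⟩ := stepk m a
      have hmem : (p : A) ^ m * d ∈ N := by
        have h1 := Submodule.smul_mem N (⟨_, hpmmul_mem d⟩ : S)
          (Submodule.subset_span (Set.mem_insert 1 _))
        have h2 : (⟨(p : A) ^ m * d, hpmmul_mem d⟩ : S) • (1 : A) = (p : A) ^ m * d := mul_one _
        rwa [h2] at h1
      rw [hd]
      exact N.add_mem hn hmem
    have hmaxS : ∀ Ω : Set (Submodule S A), Ω.Nonempty →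
        (∀ N' ∈ Ω, ∃ I : Ideal S, N' = I • (⊤ : Submodule S A)) →
        ∃ N' ∈ Ω, ∀ N'' ∈ Ω, ¬ N' < N'' := by
      intro Ω hne hform
      have hmul : ∀ N' ∈ Ω, ∀ (a x : A), x ∈ N' → a * x ∈ N' := by
        intro N' hN' a x hx
        obtain ⟨I, rfl⟩ := hform N' hN'
        refine Submodule.smul_induction_on hx ?_ ?_
        · intro r hr n _
          have heq : a * (r • n) = r • (a * n) := by
            show a * ((r : A) * n) = (r : A) * (a * n)
            ring
          rw [heq]
          exact Submodule.smul_mem_smul hr trivial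
        · intro u v hu hv
          rw [mul_add]; exact Submodule.add_mem _ hu hv
      set toI : (N' : Submodule S A) → N' ∈ Ω → Ideal A := fun N' h =>
        { carrier := ↑N'
          add_mem' := fun ha hb => N'.add_mem ha hb
          zero_mem' := N'.zero_mem
          smul_mem' := fun a x hx => by
            rw [smul_eq_mul]
            exact hmul N' h a x hx } with htoI
      obtain ⟨N₀, hN₀⟩ := hne
      obtain ⟨J, hJΩ', hJmax⟩ :=
        (set_has_maximal_iff_noetherian.2 (isNoetherianRing_iff.1 ‹IsNoetherianRing A›))
          {J : Ideal A | ∃ N' : Submodule S A, ∃ h : N' ∈ Ω, J = toI N' h}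
          ⟨toI N₀ hN₀, N₀, hN₀, rfl⟩
      obtain ⟨N', hN', rfl⟩ := hJΩ'
      refine ⟨N', hN', ?_⟩
      intro N'' hN'' hlt
      refine hJmax (toI N'' hN'') ⟨N'', hN'', rfl⟩ ?_
      rw [lt_iff_le_and_ne]
      constructor
      · intro x hx
        exact hlt.le hx
      · intro hEq
        apply hlt.ne
        apply SetLike.ext
        intro x
        constructor
        · intro hx
          exact hlt.le hx
        · intro hx
          have hx2 : x ∈ toI N'' hN'' := hx
          rw [← hEq] at hx2
          exact hx2
    haveI hNSA : IsNoetherian S A := formanek hfgS hmaxS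
    haveI hNΛA : IsNoetherian (WittVector p A) A := by
      refine isNoetherian_of_smul_realize (B := S) ?_
      rintro ⟨b, x, rfl⟩
      exact ⟨x, fun a => rfl⟩
    haveI hNm : IsNoetherian (WittVector p A) (TruncatedWittVector p m A) := by
      haveI : IsNoetherian (TruncatedWittVector p m A) (TruncatedWittVector p m A) :=
        isNoetherianRing_iff.1 IH
      refine isNoetherian_of_smul_realize (B := TruncatedWittVector p m A) ?_
      intro b
      obtain ⟨x, rfl⟩ := WittVector.truncate_surjective (p := p) m (R := A) b
      exact ⟨x, fun w => by rw [smul_eq_mul]; rfl⟩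
    set ψ : A →ₗ[WittVector p A] TruncatedWittVector p (m + 1) A :=
      { toFun := fun a => WittVector.truncate (m + 1)
          ((⇑WittVector.verschiebung)^[m] (WittVector.teichmuller p a))
        map_add' := by
          intro a b
          have h2 : WittVector.truncate (m + 1)
                ((⇑WittVector.verschiebung)^[m] (WittVector.teichmuller p a))
              + WittVector.truncate (m + 1)
                ((⇑WittVector.verschiebung)^[m] (WittVector.teichmuller p b))
              = WittVector.truncate (m + 1) ((⇑WittVector.verschiebung)^[m]
                  (WittVector.teichmuller p a + WittVector.teichmuller p b)) := by
            rw [LZAux.vIter_add, map_add]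
          rw [h2]
          refine LZAux.trunc_vIter ?_
          rw [WittVector.teichmuller_coeff_zero, LZAux.coeff_zero_add,
            WittVector.teichmuller_coeff_zero, WittVector.teichmuller_coeff_zero]
        map_smul' := by
          intro x a
          show WittVector.truncate (m + 1) ((⇑WittVector.verschiebung)^[m]
              (WittVector.teichmuller p (WittVector.ghostComponent m x * a)))
            = WittVector.truncate (m + 1) x * WittVector.truncate (m + 1)
              ((⇑WittVector.verschiebung)^[m] (WittVector.teichmuller p a))
          rw [← map_mul, LZAux.mul_vIter]
          refine LZAux.trunc_vIter ?_
          rw [WittVector.teichmuller_coeff_zero, LZAux.coeff_zero_mul,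
            WittVector.teichmuller_coeff_zero, LZAux.frob_iterate_coeff_zero] } with hψ
    set tr : TruncatedWittVector p (m + 1) A →ₗ[WittVector p A] TruncatedWittVector p m A :=
      { toFun := TruncatedWittVector.truncate (Nat.le_succ m)
        map_add' := fun a b => map_add _ a b
        map_smul' := by
          intro x w
          show TruncatedWittVector.truncate (Nat.le_succ m) (WittVector.truncate (m + 1) x * w)
            = WittVector.truncate m x * TruncatedWittVector.truncate (Nat.le_succ m) w
          rw [map_mul, TruncatedWittVector.truncate_wittVector_truncate] } with htr
    have hrange : LinearMap.range ψ = LinearMap.ker tr := by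
      ext z
      simp only [LinearMap.mem_range, LinearMap.mem_ker]
      constructor
      · rintro ⟨a, rfl⟩
        show TruncatedWittVector.truncate (Nat.le_succ m) (WittVector.truncate (m + 1)
          ((⇑WittVector.verschiebung)^[m] (WittVector.teichmuller p a))) = 0
        rw [TruncatedWittVector.truncate_wittVector_truncate]
        apply TruncatedWittVector.ext
        intro i
        rw [WittVector.coeff_truncate, TruncatedWittVector.coeff_zero]
        exact LZAux.vIter_coeff_lt i.2 _
      · intro hz
        refine ⟨z.out.coeff m, ?_⟩
        show WittVector.truncate (m + 1)
          ((⇑WittVector.verschiebung)^[m] (WittVector.teichmuller p (z.out.coeff m))) = z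
        apply TruncatedWittVector.ext
        intro i
        rw [WittVector.coeff_truncate]
        rcases Nat.lt_or_ge (i : ℕ) m with hlt | hge
        · rw [LZAux.vIter_coeff_lt hlt]
          have h3 := congrArg (fun w => TruncatedWittVector.coeff ⟨(i : ℕ), hlt⟩ w) hz
          rw [show tr z = TruncatedWittVector.truncate (Nat.le_succ m) z from rfl] at h3
          rw [TruncatedWittVector.coeff_truncate, TruncatedWittVector.coeff_zero] at h3
          have hcast : (Fin.castLE (Nat.le_succ m) ⟨(i : ℕ), hlt⟩ : Fin (m + 1)) = i :=
            Fin.ext rfl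
          rw [hcast] at h3
          exact h3.symm
        · have him : (i : ℕ) = m := by omega
          rw [← TruncatedWittVector.coeff_out z i, him, LZAux.vIter_coeff_self,
            WittVector.teichmuller_coeff_zero]
    haveI hNR : IsNoetherian (WittVector p A) (TruncatedWittVector p (m + 1) A) :=
      isNoetherian_of_range_eq_ker ψ tr hrange
    refine isNoetherianRing_iff.2 ?_
    refine isNoetherian_of_smul_realize (B := WittVector p A) ?_
    intro x
    exact ⟨WittVector.truncate (m + 1) x, fun w => rfl⟩


/-- (Langer–Zink) If `A` is a Noetherian, F-finite `ℤ_(p)`-algebra (every prime `q ≠ p` is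
invertible in `A`, and `A/pA` is F-finite), then the ring `W_r(A)` of `p`-typical Witt
vectors of length `r` over `A` is Noetherian, for every `r ≥ 1`. -/
theorem truncatedWittVector_noetherian (p : ℕ) [Fact p.Prime]
    (A : Type*) [CommRing A] [IsNoetherianRing A]
    (hZp : ∀ q : ℕ, q.Prime → q ≠ p → IsUnit (q : A))
    (hFF : IsFFinite p (A ⧸ Ideal.span {(p : A)}))
    (r : ℕ) (hr : 1 ≤ r) :
    IsNoetherianRing (TruncatedWittVector p r A) :=
  LZAux.key p A hFF r
end

section
/- Let p be a prime, A an F-finite Z_(p)-algebra, and B a finitely generated A-algebra. Then for every r ≥ 1, W_r(B) is a finitely generated W_r(A)-algebra, where the algebra structure is given by the ring homomorphism W_r(A) → W_r(B) induced functorially by the structure map A → B. -/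
/-- Functoriality of truncated Witt vectors: a ring homomorphism `f : R →+* S` induces a
ring homomorphism `W_n(R) →+* W_n(S)`. -/
noncomputable def truncatedWittMap (p : ℕ) [Fact p.Prime] (n : ℕ) {R S : Type*}
    [CommRing R] [CommRing S] (f : R →+* S) :
    TruncatedWittVector p n R →+* TruncatedWittVector p n S :=
  RingHom.liftOfRightInverse (WittVector.truncate n) TruncatedWittVector.out
    TruncatedWittVector.truncateFun_out
    ⟨(WittVector.truncate n).comp (WittVector.map f), by
      intro x hx
      rw [WittVector.mem_ker_truncate] at hx
      rw [RingHom.mem_ker]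
      ext i
      simp only [RingHom.comp_apply, WittVector.coeff_truncate, WittVector.map_coeff,
        TruncatedWittVector.coeff_zero]
      rw [hx i i.isLt, map_zero]⟩

set_option linter.unusedSectionVars false
set_option maxHeartbeats 1000000

namespace LZAux

open WittVector TruncatedWittVector Function

variable {p : ℕ} [hp : Fact p.Prime] {R S : Type*} [CommRing R] [CommRing S]

local notation "𝕎" => WittVector p

lemma iterate_verschiebung_coeff_lt (x : 𝕎 R) {j k : ℕ} (hj : j < k) :
    (verschiebung^[k] x).coeff j = 0 := by
  induction k generalizing j x with
  | zero => omega
  | succ k ih =>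
    rw [iterate_succ_apply']
    rcases j with _ | j
    · exact verschiebung_coeff_zero _
    · rw [verschiebung_coeff_succ]
      exact ih _ (by omega)

lemma ghostComponent_zero_eq (x : 𝕎 R) : ghostComponent 0 x = x.coeff 0 := by
  rw [ghostComponent_apply, wittPolynomial_zero, MvPolynomial.aeval_X]

lemma coeff_zero_iterate_frobenius (k : ℕ) (x : 𝕎 R) :
    (frobenius^[k] x).coeff 0 = ghostComponent k x := by
  induction k generalizing x with
  | zero => exact ghostComponent_zero_eq x |>.symm
  | succ k ih =>
    rw [iterate_succ_apply, ih, ghostComponent_frobenius]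

lemma ghostComponent_iterate_verschiebung (m j : ℕ) (x : 𝕎 R) :
    ghostComponent (m + j) (verschiebung^[j] x) = (p : R) ^ j * ghostComponent m x := by
  induction j with
  | zero => simp
  | succ j ih =>
    rw [iterate_succ_apply', show m + (j + 1) = (m + j) + 1 from rfl,
      ghostComponent_verschiebung, ih, pow_succ]
    ring

lemma iterate_verschiebung_sub (a b : 𝕎 R) (k : ℕ) :
    verschiebung^[k] a - verschiebung^[k] b = verschiebung^[k] (a - b) := by
  induction k with
  | zero => rfl
  | succ k ih =>
    rw [iterate_succ_apply', iterate_succ_apply', iterate_succ_apply', ← map_sub, ih]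

lemma iterate_verschiebung_add (a b : 𝕎 R) (k : ℕ) :
    verschiebung^[k] a + verschiebung^[k] b = verschiebung^[k] (a + b) := by
  induction k with
  | zero => rfl
  | succ k ih =>
    rw [iterate_succ_apply', iterate_succ_apply', iterate_succ_apply', ← map_add, ih]

lemma map_iterate_verschiebung (f : R →+* S) (k : ℕ) (x : 𝕎 R) :
    map f (verschiebung^[k] x) = verschiebung^[k] (map f x) := by
  induction k with
  | zero => rfl
  | succ k ih => rw [iterate_succ_apply', map_verschiebung, ih, iterate_succ_apply']

lemma ghostComponent_map (f : R →+* S) (n : ℕ) (w : 𝕎 R) :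
    ghostComponent n (map f w) = f (ghostComponent n w) := by
  rw [ghostComponent_apply, ghostComponent_apply, aeval_wittPolynomial, aeval_wittPolynomial,
    map_sum]
  refine Finset.sum_congr rfl fun i _ => ?_
  rw [map_mul, map_pow, map_pow, map_natCast, map_coeff]

lemma truncate_out {r : ℕ} (x : TruncatedWittVector p r S) :
    WittVector.truncate r x.out = x :=
  truncateFun_out x

noncomputable def ghostT (r k : ℕ) (hk : k < r) : TruncatedWittVector p r S →+* S :=
  RingHom.liftOfRightInverse (WittVector.truncate r) out truncateFun_out
    ⟨ghostComponent k, by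
      intro x hx
      rw [WittVector.mem_ker_truncate] at hx
      rw [RingHom.mem_ker, ghostComponent_apply, aeval_wittPolynomial]
      refine Finset.sum_eq_zero fun i hi => ?_
      rw [Finset.mem_range] at hi
      rw [hx i (by omega), zero_pow (pow_ne_zero _ hp.out.ne_zero), mul_zero]⟩

lemma ghostT_truncate (r k : ℕ) (hk : k < r) (w : 𝕎 S) :
    ghostT r k hk (WittVector.truncate r w) = ghostComponent k w :=
  RingHom.liftOfRightInverse_comp_apply _ _ _ _ _

lemma truncatedWittMap_truncate (f : R →+* S) (r : ℕ) (w : 𝕎 R) :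
    truncatedWittMap p r f (WittVector.truncate r w) = WittVector.truncate r (map f w) :=
  RingHom.liftOfRightInverse_comp_apply _ _ _ _ _

lemma out_coeff_eq {r : ℕ} (x : TruncatedWittVector p r S) (j : ℕ) (hj : j < r) :
    x.out.coeff j = x.coeff ⟨j, hj⟩ :=
  coeff_out x ⟨j, hj⟩

lemma ghostT_natural (f : R →+* S) (r k : ℕ) (hk : k < r) (x : TruncatedWittVector p r R) :
    ghostT r k hk (truncatedWittMap p r f x) = f (ghostT r k hk x) := by
  conv_lhs => rw [← truncate_out x]
  rw [truncatedWittMap_truncate, ghostT_truncate, ghostComponent_map, ← ghostT_truncate r k hk,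
    truncate_out]

variable (p) in
/-- The distinguished elements `V^k [c]` of the truncated Witt vectors. -/
noncomputable def gV (r k : ℕ) (c : S) : TruncatedWittVector p r S :=
  WittVector.truncate r (verschiebung^[k] (teichmuller p c))

lemma gV_coeff (r k : ℕ) (c : S) (j : Fin r) :
    (gV p r k c).coeff j = if (j : ℕ) = k then c else 0 := by
  rw [gV, WittVector.coeff_truncate]
  rcases lt_trichotomy (j : ℕ) k with h | h | h
  · rw [if_neg h.ne, iterate_verschiebung_coeff_lt _ h]
  · rw [if_pos h, h]
    have h2 := iterate_verschiebung_coeff (teichmuller p c) k 0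
    rw [zero_add] at h2
    rw [h2, teichmuller_coeff_zero]
  · rw [if_neg h.ne']
    obtain ⟨i, hi⟩ : ∃ i, (j : ℕ) = i + k := ⟨(j : ℕ) - k, by omega⟩
    rw [hi, iterate_verschiebung_coeff]
    exact teichmuller_coeff_pos p c i (by omega)

lemma ghostT_gV (r k j : ℕ) (hk : k < r) (hj : j ≤ k) (c : S) :
    ghostT r k hk (gV p r j c) = (p : S) ^ j * c ^ p ^ (k - j) := by
  rw [gV, ghostT_truncate]
  have h := ghostComponent_iterate_verschiebung (k - j) j (teichmuller p c)
  rw [ghostComponent_teichmuller] at h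
  conv_lhs => rw [show k = (k - j) + j by omega]
  exact h

lemma gV_natural (f : R →+* S) (r k : ℕ) (c : R) :
    truncatedWittMap p r f (gV p r k c) = gV p r k (f c) := by
  rw [gV, truncatedWittMap_truncate, map_iterate_verschiebung, map_teichmuller, gV]

lemma gV_zero_mul (r : ℕ) (c c' : S) : gV p r 0 (c * c') = gV p r 0 c * gV p r 0 c' := by
  simp only [gV, iterate_zero, id_eq]
  rw [← map_mul, map_mul (teichmuller p)]

lemma gV_zero_one (r : ℕ) : gV p r 0 (1 : S) = 1 := by
  simp only [gV, iterate_zero, id_eq]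
  rw [map_one (teichmuller p), map_one]


section KeyLemmas

theorem truncated_mul_coeff (r k : ℕ) (hk : k < r) (x y : TruncatedWittVector p r S)
    (hx : ∀ j : Fin r, (j : ℕ) < k → x.coeff j = 0) :
    (∀ j : Fin r, (j : ℕ) < k → (x * y).coeff j = 0) ∧
      (x * y).coeff ⟨k, hk⟩ = x.coeff ⟨k, hk⟩ * ghostT r k hk y := by
  have hX : ∀ j < k, x.out.coeff j = 0 := fun j hj => by
    rw [out_coeff_eq x j (hj.trans hk)]
    exact hx _ hj
  have hV := WittVector.eq_iterate_verschiebung hX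
  have hxy : x * y = WittVector.truncate r (x.out * y.out) := by
    rw [map_mul, truncate_out, truncate_out]
  have hm : x.out * y.out = verschiebung^[k] (x.out.shift k * frobenius^[k] y.out) := by
    conv_lhs => rw [hV]
    exact iterate_verschiebung_mul_left _ _ _
  constructor
  · intro j hj
    rw [hxy, WittVector.coeff_truncate, hm]
    exact iterate_verschiebung_coeff_lt _ hj
  · rw [hxy, WittVector.coeff_truncate, hm]
    have h2 := iterate_verschiebung_coeff (x.out.shift k * frobenius^[k] y.out) k 0
    rw [zero_add] at h2
    show (verschiebung^[k] (x.out.shift k * frobenius^[k] y.out)).coeff k = _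
    rw [h2, mul_coeff_zero, WittVector.shift_coeff, Nat.add_zero,
      coeff_zero_iterate_frobenius, out_coeff_eq x k hk, ← ghostT_truncate r k hk y.out,
      truncate_out]

theorem truncated_sub_coeff (r k : ℕ) (hk : k < r) (x y : TruncatedWittVector p r S)
    (hx : ∀ j : Fin r, (j : ℕ) < k → x.coeff j = 0)
    (hy : ∀ j : Fin r, (j : ℕ) < k → y.coeff j = 0) :
    (∀ j : Fin r, (j : ℕ) < k → (x - y).coeff j = 0) ∧
      (x - y).coeff ⟨k, hk⟩ = x.coeff ⟨k, hk⟩ - y.coeff ⟨k, hk⟩ := by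
  have hX : ∀ j < k, x.out.coeff j = 0 := fun j hj => by
    rw [out_coeff_eq x j (hj.trans hk)]; exact hx _ hj
  have hY : ∀ j < k, y.out.coeff j = 0 := fun j hj => by
    rw [out_coeff_eq y j (hj.trans hk)]; exact hy _ hj
  have hxy : x - y = WittVector.truncate r (x.out - y.out) := by
    rw [map_sub, truncate_out, truncate_out]
  have hm : x.out - y.out = verschiebung^[k] (x.out.shift k - y.out.shift k) := by
    conv_lhs => rw [WittVector.eq_iterate_verschiebung hX, WittVector.eq_iterate_verschiebung hY]
    exact iterate_verschiebung_sub _ _ _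
  have hsub0 : ∀ a b : 𝕎 S, (a - b).coeff 0 = a.coeff 0 - b.coeff 0 := fun a b => by
    rw [← ghostComponent_zero_eq, ← ghostComponent_zero_eq, ← ghostComponent_zero_eq, map_sub]
  constructor
  · intro j hj
    rw [hxy, WittVector.coeff_truncate, hm]
    exact iterate_verschiebung_coeff_lt _ hj
  · rw [hxy, WittVector.coeff_truncate, hm]
    have h2 := iterate_verschiebung_coeff (x.out.shift k - y.out.shift k) k 0
    rw [zero_add] at h2
    show (verschiebung^[k] (x.out.shift k - y.out.shift k)).coeff k = _
    rw [h2, hsub0, WittVector.shift_coeff, WittVector.shift_coeff, Nat.add_zero,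
      out_coeff_eq x k hk, out_coeff_eq y k hk]

theorem truncated_add_coeff (r k : ℕ) (hk : k < r) (x y : TruncatedWittVector p r S)
    (hx : ∀ j : Fin r, (j : ℕ) < k → x.coeff j = 0)
    (hy : ∀ j : Fin r, (j : ℕ) < k → y.coeff j = 0) :
    (∀ j : Fin r, (j : ℕ) < k → (x + y).coeff j = 0) ∧
      (x + y).coeff ⟨k, hk⟩ = x.coeff ⟨k, hk⟩ + y.coeff ⟨k, hk⟩ := by
  have hX : ∀ j < k, x.out.coeff j = 0 := fun j hj => by
    rw [out_coeff_eq x j (hj.trans hk)]; exact hx _ hj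
  have hY : ∀ j < k, y.out.coeff j = 0 := fun j hj => by
    rw [out_coeff_eq y j (hj.trans hk)]; exact hy _ hj
  have hxy : x + y = WittVector.truncate r (x.out + y.out) := by
    rw [map_add, truncate_out, truncate_out]
  have hm : x.out + y.out = verschiebung^[k] (x.out.shift k + y.out.shift k) := by
    conv_lhs => rw [WittVector.eq_iterate_verschiebung hX, WittVector.eq_iterate_verschiebung hY]
    exact iterate_verschiebung_add _ _ _
  constructor
  · intro j hj
    rw [hxy, WittVector.coeff_truncate, hm]
    exact iterate_verschiebung_coeff_lt _ hj
  · rw [hxy, WittVector.coeff_truncate, hm]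
    have h2 := iterate_verschiebung_coeff (x.out.shift k + y.out.shift k) k 0
    rw [zero_add] at h2
    show (verschiebung^[k] (x.out.shift k + y.out.shift k)).coeff k = _
    rw [h2, WittVector.add_coeff_zero, WittVector.shift_coeff, WittVector.shift_coeff,
      Nat.add_zero, out_coeff_eq x k hk, out_coeff_eq y k hk]

end KeyLemmas

lemma sum_pow_eq {R : Type*} [CommRing R] {ι : Type*} (s : Finset ι) (u : ι → R) :
    ∃ w : R, (∑ i ∈ s, u i) ^ p = (∑ i ∈ s, u i ^ p) + p * w := by
  classical
  induction s using Finset.cons_induction with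
  | empty => exact ⟨0, by simp [zero_pow hp.out.ne_zero]⟩
  | cons a s ha ih =>
    obtain ⟨w, hw⟩ := ih
    obtain ⟨v, hv⟩ := exists_add_pow_prime_eq hp.out (u a) (∑ i ∈ s, u i)
    refine ⟨u a * (∑ i ∈ s, u i) * v + w, ?_⟩
    rw [Finset.sum_cons, hv, hw, Finset.sum_cons]
    ring

-- decomposition in the quotient ring, where (p : Q) = 0
lemma dec_bar {Q : Type*} [CommRing Q] (hp0 : (p : Q) = 0)
    (hFF : ∃ F : Q →+* Q, (∀ x : Q, F x = x ^ p) ∧ F.Finite) (k : ℕ) :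
    ∃ (m : ℕ) (d : Fin m → Q), ∀ a : Q, ∃ g : Fin m → Q, a = ∑ i, g i ^ p ^ k * d i := by
  obtain ⟨F, hF, hFin⟩ := hFF
  have step : ∃ (t : ℕ) (T : Fin t → Q), ∀ a : Q, ∃ c : Fin t → Q, a = ∑ j, c j ^ p * T j := by
    letI inst : Algebra Q Q := F.toAlgebra
    letI : Module Q Q := inst.toModule
    letI : SMul Q Q := inst.toSMul
    obtain ⟨s, hs⟩ := hFin.1
    refine ⟨s.card, fun j => (s.equivFin.symm j : Q), fun a => ?_⟩
    have ha : a ∈ Submodule.span Q (↑s : Set Q) := hs ▸ Submodule.mem_top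
    obtain ⟨c, -, hc⟩ := Submodule.mem_span_finset.1 ha
    refine ⟨fun j => c (s.equivFin.symm j), ?_⟩
    have hsmul : ∀ (u v : Q), u • v = u ^ p * v := fun u v => by
      rw [Algebra.smul_def, RingHom.algebraMap_toAlgebra, hF]
    calc a = ∑ i ∈ s, c i • i := hc.symm
      _ = ∑ i : s, c (i : Q) • (i : Q) := (Finset.sum_coe_sort s _).symm
      _ = ∑ j : Fin s.card, c (s.equivFin.symm j : Q) • (s.equivFin.symm j : Q) :=
          (Equiv.sum_comp s.equivFin.symm _).symm
      _ = ∑ j, c (s.equivFin.symm j : Q) ^ p * (s.equivFin.symm j : Q) := by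
          simp only [hsmul]
  obtain ⟨t, T, hT⟩ := step
  induction k with
  | zero =>
    refine ⟨1, fun _ => 1, fun a => ⟨fun _ => a, ?_⟩⟩
    simp
  | succ k ih =>
    obtain ⟨m, d, hd⟩ := ih
    refine ⟨m * t, fun i => d (finProdFinEquiv.symm i).1 ^ p * T (finProdFinEquiv.symm i).2,
      fun a => ?_⟩
    obtain ⟨c, hc⟩ := hT a
    choose g hg using fun j => hd (c j)
    refine ⟨fun i => g (finProdFinEquiv.symm i).2 (finProdFinEquiv.symm i).1, ?_⟩
    have key : ∀ j : Fin t, c j ^ p = ∑ i : Fin m, g j i ^ p ^ (k + 1) * d i ^ p := by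
      intro j
      obtain ⟨w, hw⟩ := sum_pow_eq (p := p) Finset.univ (fun i : Fin m => g j i ^ p ^ k * d i)
      rw [hg j] at *
      rw [hw, hp0, zero_mul, add_zero]
      · refine Finset.sum_congr rfl fun i _ => ?_
        rw [mul_pow, ← pow_mul, ← pow_succ]
    calc a = ∑ j, c j ^ p * T j := hc
      _ = ∑ j : Fin t, ∑ i : Fin m, g j i ^ p ^ (k + 1) * (d i ^ p * T j) := by
          refine Finset.sum_congr rfl fun j _ => ?_
          rw [key j, Finset.sum_mul]
          exact Finset.sum_congr rfl fun i _ => by ring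
      _ = ∑ q : Fin m × Fin t, g q.2 q.1 ^ p ^ (k + 1) * (d q.1 ^ p * T q.2) := by
          rw [Fintype.sum_prod_type]
          exact Finset.sum_comm
      _ = _ := by
          rw [← Equiv.sum_comp finProdFinEquiv
            (fun i => g (finProdFinEquiv.symm i).2 (finProdFinEquiv.symm i).1 ^ p ^ (k + 1) *
              (d (finProdFinEquiv.symm i).1 ^ p * T (finProdFinEquiv.symm i).2))]
          simp only [Equiv.symm_apply_apply]


-- lifted decomposition in A
lemma dec {A : Type*} [CommRing A]
    (hFF : ∃ F : (A ⧸ Ideal.span {(p : A)}) →+* (A ⧸ Ideal.span {(p : A)}),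
      (∀ x, F x = x ^ p) ∧ F.Finite) (k : ℕ) :
    ∃ (m : ℕ) (d : Fin m → A), ∀ a : A, ∃ (g : Fin m → A) (a' : A),
      a = (∑ i, g i ^ p ^ k * d i) + p * a' := by
  set I := Ideal.span {(p : A)} with hI
  have hp0 : ((p : ℕ) : A ⧸ I) = 0 := by
    rw [← map_natCast (Ideal.Quotient.mk I) p]
    exact Ideal.Quotient.eq_zero_iff_mem.2 (Ideal.subset_span (Set.mem_singleton _))
  obtain ⟨m, dbar, hdbar⟩ := dec_bar hp0 hFF k
  choose dl hdl using fun i => Ideal.Quotient.mk_surjective (I := I) (dbar i)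
  refine ⟨m, dl, fun a => ?_⟩
  obtain ⟨gbar, hg⟩ := hdbar (Ideal.Quotient.mk I a)
  choose gl hgl using fun i => Ideal.Quotient.mk_surjective (I := I) (gbar i)
  have hz : Ideal.Quotient.mk I (a - ∑ i, gl i ^ p ^ k * dl i) = 0 := by
    rw [map_sub, map_sum, sub_eq_zero, hg]
    refine Finset.sum_congr rfl fun i _ => ?_
    rw [map_mul, map_pow, hgl, hdl]
  rw [Ideal.Quotient.eq_zero_iff_mem, hI, Ideal.mem_span_singleton'] at hz
  obtain ⟨a', ha'⟩ := hz
  exact ⟨gl, a', by linear_combination -ha'⟩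

-- monomial representation
lemma mem_monoid_closure_eq_prod {B : Type*} [CommRing B] (xs : Finset B) (μ : B)
    (hμ : μ ∈ Submonoid.closure (xs : Set B)) :
    ∃ e : B → ℕ, μ = ∏ b ∈ xs, b ^ e b := by
  classical
  induction hμ using Submonoid.closure_induction with
  | mem b hb =>
    refine ⟨fun c => if c = b then 1 else 0, ?_⟩
    rw [Finset.prod_eq_single b (fun c _ hc => by simp [hc]) (fun h => absurd hb h)]
    simp
  | one => exact ⟨fun _ => 0, by simp⟩
  | mul μ ν hμ' hν' ihμ ihν =>
    obtain ⟨e₁, rfl⟩ := ihμ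
    obtain ⟨e₂, rfl⟩ := ihν
    refine ⟨e₁ + e₂, ?_⟩
    rw [← Finset.prod_mul_distrib]
    exact Finset.prod_congr rfl fun c _ => (pow_add _ _ _).symm

lemma prod_pow_factor {B : Type*} [CommRing B] (xs : Finset B) (e : B → ℕ) (P : ℕ) (hP : 0 < P) :
    ∃ (ν : B) (εf : B → ℕ), ν ∈ Submonoid.closure (xs : Set B) ∧ (∀ b, εf b < P) ∧
      ∏ b ∈ xs, b ^ e b = ν ^ P * ∏ b ∈ xs, b ^ εf b := by
  refine ⟨∏ b ∈ xs, b ^ (e b / P), fun b => e b % P,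
    prod_mem fun b hb => pow_mem (Submonoid.subset_closure hb) _,
    fun b => Nat.mod_lt _ hP, ?_⟩
  rw [← Finset.prod_pow, ← Finset.prod_mul_distrib]
  refine Finset.prod_congr rfl fun b _ => ?_
  rw [← pow_mul, ← pow_add]
  congr 1
  exact (Nat.div_add_mod' (e b) P).symm

end LZAux

open LZAux in
/-- (Langer–Zink) Let `A` be an F-finite `ℤ_(p)`-algebra (every prime `q ≠ p` is invertible
in `A`, and `A/pA` is F-finite), and `B` a finitely generated `A`-algebra.  Then for every
`r ≥ 1`, `W_r(B)` is a finitely generated `W_r(A)`-algebra, via the ring homomorphism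
`W_r(A) → W_r(B)` induced functorially by the structure map `A → B`. -/
theorem truncatedWittVector_finiteType (p : ℕ) [Fact p.Prime]
    (A : Type*) [CommRing A]
    (hZp : ∀ q : ℕ, q.Prime → q ≠ p → IsUnit (q : A))
    (hFF : IsFFinite p (A ⧸ Ideal.span {(p : A)}))
    (B : Type*) [CommRing B] [Algebra A B] (hB : Algebra.FiniteType A B)
    (r : ℕ) (hr : 1 ≤ r) :
    (truncatedWittMap p r (algebraMap A B)).FiniteType := by
  classical
  obtain ⟨xs, hxs⟩ := hB.out
  have hdec := fun k : ℕ => LZAux.dec (A := A) (p := p) hFF k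
  choose m d hd using hdec
  letI : Algebra (TruncatedWittVector p r A) (TruncatedWittVector p r B) :=
    (truncatedWittMap p r (algebraMap A B)).toAlgebra
  -- generating set
  let G : Set (TruncatedWittVector p r B) :=
    ((fun b => gV p r 0 b) '' (xs : Set B)) ∪
    ((⋃ k : Fin r, Set.range fun q : Fin (m (k : ℕ)) × (↥xs → Fin (p ^ (k : ℕ))) =>
        gV p r (k : ℕ)
          ((algebraMap A B) (d (k : ℕ) q.1) * ∏ b : ↥xs, (b : B) ^ ((q.2 b : ℕ)))) ∪
     (⋃ k : Fin r, Set.range fun e : (↥xs → Fin (p ^ (k : ℕ))) =>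
        gV p r (k : ℕ) (∏ b : ↥xs, (b : B) ^ ((e b : ℕ)))))
  have hGfin : G.Finite := by
    refine (Set.Finite.image _ xs.finite_toSet).union (Set.Finite.union ?_ ?_) <;>
      exact Set.finite_iUnion fun k => Set.finite_range _
  set Sal : Subalgebra (TruncatedWittVector p r A) (TruncatedWittVector p r B) :=
    Algebra.adjoin _ G with hSaldef
  have himg : ∀ w : TruncatedWittVector p r A, truncatedWittMap p r (algebraMap A B) w ∈ Sal :=
    fun w => Sal.algebraMap_mem w
  -- every element of B occurs as the k-th coordinate of an element of Sal supported in
  -- degrees ≥ k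
  have hT_univ : ∀ (k : ℕ) (hk : k < r) (b : B), ∃ s, s ∈ Sal ∧
      (∀ j : Fin r, (j : ℕ) < k → s.coeff j = 0) ∧ s.coeff ⟨k, hk⟩ = b := by
    intro k hk
    let Tm : B → Prop := fun b => ∃ s, s ∈ Sal ∧
      (∀ j : Fin r, (j : ℕ) < k → s.coeff j = 0) ∧ s.coeff ⟨k, hk⟩ = b
    show ∀ b, Tm b
    have T0 : Tm 0 := ⟨0, zero_mem _, fun _ _ => by simp, by simp⟩
    have Tadd : ∀ b c, Tm b → Tm c → Tm (b + c) := by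
      rintro b c ⟨s, hs, hs0, hsk⟩ ⟨t, ht, ht0, htk⟩
      obtain ⟨h1, h2⟩ := truncated_add_coeff r k hk s t hs0 ht0
      exact ⟨s + t, add_mem hs ht, h1, by rw [h2, hsk, htk]⟩
    have Tsum : ∀ {ι : Type} (s : Finset ι) (v : ι → B),
        (∀ i ∈ s, Tm (v i)) → Tm (∑ i ∈ s, v i) := by
      intro ι s v
      induction s using Finset.cons_induction with
      | empty => intro _; simpa using T0
      | cons a s ha ih =>
        intro hv
        rw [Finset.sum_cons]
        exact Tadd _ _ (hv a (Finset.mem_cons_self a s))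
          (ih fun i hi => hv i (Finset.mem_cons_of_mem hi))
    have Tmul : ∀ (s' : TruncatedWittVector p r B), s' ∈ Sal → ∀ b, Tm b →
        Tm (ghostT r k hk s' * b) := by
      rintro s' hs' b ⟨s, hs, hs0, hsk⟩
      obtain ⟨h1, h2⟩ := truncated_mul_coeff r k hk s s' hs0
      exact ⟨s * s', mul_mem hs hs', h1, by rw [h2, hsk, mul_comm]⟩
    have TgV : ∀ c : B, gV p r k c ∈ Sal → Tm c := by
      intro c hc
      refine ⟨gV p r k c, hc, fun j hj => ?_, ?_⟩
      · rw [gV_coeff]; exact if_neg (by omega)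
      · rw [gV_coeff]; exact if_pos rfl
    have hfgV : ∀ (k' : ℕ) (a : A), gV p r k' ((algebraMap A B) a) ∈ Sal := fun k' a => by
      rw [← gV_natural]
      exact himg _
    have hmono : ∀ ν ∈ Submonoid.closure (xs : Set B), gV p r 0 ν ∈ Sal := by
      intro ν hν
      induction hν using Submonoid.closure_induction with
      | mem b hb => exact Algebra.subset_adjoin (Or.inl ⟨b, hb, rfl⟩)
      | one => rw [gV_zero_one]; exact one_mem _
      | mul a b _ _ iha ihb => rw [gV_zero_mul]; exact mul_mem iha ihb
    have hpow : ∀ j : ℕ, ((p : TruncatedWittVector p r B) ^ j) ∈ Sal :=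
      fun j => pow_mem (Subalgebra.natCast_mem Sal p) j
    have hψpow : ∀ j : ℕ,
        ghostT (S := B) r k hk ((p : TruncatedWittVector p r B) ^ j) = (p : B) ^ j :=
      fun j => by rw [map_pow, map_natCast]
    have hseedε : ∀ εf : B → ℕ, (∀ b, εf b < p ^ k) → Tm (∏ b ∈ xs, b ^ εf b) := by
      intro εf hεf
      apply TgV
      apply Algebra.subset_adjoin
      refine Or.inr (Or.inr (Set.mem_iUnion.2 ⟨⟨k, hk⟩,
        ⟨fun b : ↥xs => ⟨εf b, hεf b⟩, ?_⟩⟩))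
      exact congrArg (gV p r k) (Finset.prod_coe_sort xs (fun b => b ^ εf b))
    have hseeddε : ∀ (l : Fin (m k)) (εf : B → ℕ), (∀ b, εf b < p ^ k) →
        Tm ((algebraMap A B) (d k l) * ∏ b ∈ xs, b ^ εf b) := by
      intro l εf hεf
      apply TgV
      apply Algebra.subset_adjoin
      refine Or.inr (Or.inl (Set.mem_iUnion.2 ⟨⟨k, hk⟩,
        ⟨(l, fun b : ↥xs => ⟨εf b, hεf b⟩), ?_⟩⟩))
      exact congrArg (fun t => gV p r k ((algebraMap A B) (d k l) * t))
        (Finset.prod_coe_sort xs (fun b => b ^ εf b))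
    have main : ∀ (i : ℕ) (a : A) (μ : B), μ ∈ Submonoid.closure (xs : Set B) →
        Tm ((p : B) ^ (k - i) * ((algebraMap A B) a * μ)) := by
      intro i
      induction i with
      | zero =>
        intro a μ hμ
        obtain ⟨e, rfl⟩ := mem_monoid_closure_eq_prod xs μ hμ
        obtain ⟨ν, εf, hν, hεlt, heq⟩ :=
          prod_pow_factor xs e (p ^ k) (pow_pos (Fact.out (p := p.Prime)).pos k)
        rw [heq]
        have h1 := Tmul _ (hmono ν hν) _ (hseedε εf hεlt)
        rw [ghostT_gV r k 0 hk (Nat.zero_le k), pow_zero, one_mul, Nat.sub_zero] at h1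
        have h2 := Tmul _ (hfgV k a) _ h1
        rw [ghostT_gV r k k hk le_rfl, Nat.sub_self, pow_zero, pow_one] at h2
        have harr : (p : B) ^ (k - 0) * ((algebraMap A B) a *
            (ν ^ p ^ k * ∏ b ∈ xs, b ^ εf b)) =
            (p : B) ^ k * (algebraMap A B) a * (ν ^ p ^ k * ∏ b ∈ xs, b ^ εf b) := by
          rw [Nat.sub_zero]; ring
        rw [harr]
        exact h2
      | succ i ih =>
        intro a μ hμ
        by_cases hik : k ≤ i
        · rw [show k - (i + 1) = k - i by omega]
          exact ih a μ hμ
        · obtain ⟨g, a', hga⟩ := hd k a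
          obtain ⟨e, rfl⟩ := mem_monoid_closure_eq_prod xs μ hμ
          obtain ⟨ν, εf, hν, hεlt, heq⟩ :=
            prod_pow_factor xs e (p ^ k) (pow_pos (Fact.out (p := p.Prime)).pos k)
          rw [hga]
          have hfa : (algebraMap A B) ((∑ l, g l ^ p ^ k * d k l) + (p : A) * a') =
              (∑ l, (algebraMap A B) (g l) ^ p ^ k * (algebraMap A B) (d k l)) +
                (p : B) * (algebraMap A B) a' := by
            rw [map_add, map_mul, map_natCast, map_sum]
            refine congrArg₂ (· + ·) (Finset.sum_congr rfl fun l _ => ?_) rfl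
            rw [map_mul, map_pow]
          have expand : (p : B) ^ (k - (i + 1)) *
              ((algebraMap A B) ((∑ l, g l ^ p ^ k * d k l) + (p : A) * a') *
                ∏ b ∈ xs, b ^ e b) =
              (∑ l : Fin (m k), (p : B) ^ (k - (i + 1)) * ((algebraMap A B) (g l) ^ p ^ k *
                (ν ^ p ^ k * ((algebraMap A B) (d k l) * ∏ b ∈ xs, b ^ εf b))))
              + (p : B) ^ (k - i) * ((algebraMap A B) a' * ∏ b ∈ xs, b ^ e b) := by
            rw [hfa, show k - i = (k - (i + 1)) + 1 by omega, pow_succ]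
            conv_lhs => rw [heq]
            rw [add_mul, mul_add]
            congr 1
            · rw [Finset.sum_mul, Finset.mul_sum]
              refine Finset.sum_congr rfl fun l _ => ?_
              ring
            · rw [heq]
              ring
          rw [expand]
          refine Tadd _ _ (Tsum Finset.univ _ fun l _ => ?_) (ih a' _ hμ)
          have h1 := Tmul _ (hmono ν hν) _ (hseeddε l εf hεlt)
          rw [ghostT_gV r k 0 hk (Nat.zero_le k), pow_zero, one_mul, Nat.sub_zero] at h1
          have h2 := Tmul _ (hfgV 0 (g l)) _ h1
          rw [ghostT_gV r k 0 hk (Nat.zero_le k), pow_zero, one_mul, Nat.sub_zero] at h2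
          have h3 := Tmul _ (hpow (k - (i + 1))) _ h2
          rw [hψpow] at h3
          exact h3
    -- conclude : every b ∈ B lies in Tm
    intro b
    have hbmem : b ∈ Subalgebra.toSubmodule (Algebra.adjoin A (xs : Set B)) := by
      rw [hxs]; trivial
    rw [Algebra.adjoin_eq_span] at hbmem
    obtain ⟨n, cc, mm, hsum⟩ := Submodule.mem_span_set'.1 hbmem
    rw [← hsum]
    refine Tsum Finset.univ _ fun i _ => ?_
    have hμ : ((mm i : B)) ∈ Submonoid.closure (xs : Set B) := (mm i).2
    have hmain := main k (cc i) (mm i) hμ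
    rw [Nat.sub_self, pow_zero, one_mul] at hmain
    rw [Algebra.smul_def]
    exact hmain
  -- descending induction on the support
  have hdesc : ∀ (i : ℕ) (z : TruncatedWittVector p r B),
      (∀ j : Fin r, (j : ℕ) < r - i → z.coeff j = 0) → z ∈ Sal := by
    intro i
    induction i with
    | zero =>
      intro z hz
      have hz0 : z = 0 := by
        ext j
        simp [hz j (by omega)]
      rw [hz0]
      exact zero_mem _
    | succ i ih =>
      intro z hz
      by_cases hineq : r ≤ i
      · exact ih z fun j hj => absurd hj (by omega)
      · have hk : r - (i + 1) < r := by omega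
        set k := r - (i + 1) with hkdef
        obtain ⟨s, hsSal, hs0, hsk⟩ := hT_univ k hk (z.coeff ⟨k, hk⟩)
        have hz0 : ∀ j : Fin r, (j : ℕ) < k → z.coeff j = 0 := fun j hj => hz j (by omega)
        obtain ⟨h1, h2⟩ := truncated_sub_coeff r k hk z s hz0 hs0
        have hzs : z - s ∈ Sal := by
          apply ih
          intro j hj
          rcases Nat.lt_or_ge (j : ℕ) k with h | h
          · exact h1 j h
          · have hjc : (j : ℕ) = k := by omega
            have hjk : j = (⟨k, hk⟩ : Fin r) := Fin.ext hjc
            rw [hjk, h2, hsk, sub_self]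
        have hzz : z = (z - s) + s := by ring
        rw [hzz]
        exact add_mem hzs hsSal
  exact (⟨⟨hGfin.toFinset, by
    rw [Set.Finite.coe_toFinset]
    exact top_unique fun z _ => hdesc r z fun j hj => absurd hj (by omega)⟩⟩ :
      @Algebra.FiniteType _ _ _ _ (truncatedWittMap p r (algebraMap A B)).toAlgebra)
end

section
/- Let B be a commutative Noetherian ring and I₁, I₂ ⊆ B ideals. Then for every s ≥ 1 there exists t ≥ s such that I₁^t ∩ I₂^t ⊆ (I₁ ∩ I₂)^s. Consequently, the square of pro B-modules with corners {B/(I₁∩I₂)^s}_s, {B/I₁^s}_s, {B/I₂^s}_s, {B/(I₁+I₂)^s}_s (with the canonical quotient maps) is bicartesian. -/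
/-- (Artin–Rees bicartesianity.) Let `B` be a commutative Noetherian ring and
`I₁, I₂ ⊆ B` ideals.  Then for every `s ≥ 1` there exists `t ≥ s` with
`I₁^t ∩ I₂^t ⊆ (I₁ ∩ I₂)^s`.  Consequently the square of pro `B`-modules with corners
`{B/(I₁∩I₂)^s}`, `{B/I₁^s}`, `{B/I₂^s}`, `{B/(I₁+I₂)^s}` is bicartesian, i.e. the sequence
`0 → {B/(I₁∩I₂)^s} → {B/I₁^s} ⊕ {B/I₂^s} → {B/(I₁+I₂)^s} → 0` of pro modules is exact:
pro-injectivity on the left (the first clause), pro-exactness in the middle (the second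
clause), and surjectivity on the right (the third clause). -/
theorem artinRees_bicartesian (B : Type*) [CommRing B] [IsNoetherianRing B]
    (I₁ I₂ : Ideal B) :
    (∀ s : ℕ, 1 ≤ s → ∃ t : ℕ, s ≤ t ∧ I₁ ^ t ⊓ I₂ ^ t ≤ (I₁ ⊓ I₂) ^ s) ∧
    (∀ s : ℕ, 1 ≤ s → ∃ t : ℕ, s ≤ t ∧ ∀ x y : B, x - y ∈ (I₁ ⊔ I₂) ^ t →
      ∃ w : B, x - w ∈ I₁ ^ s ∧ y - w ∈ I₂ ^ s) ∧
    (∀ s : ℕ, 1 ≤ s → ∀ z : B ⧸ (I₁ ⊔ I₂) ^ s,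
      ∃ x y : B, Ideal.Quotient.mk ((I₁ ⊔ I₂) ^ s) (x - y) = z) := by
  refine ⟨?_, ?_, ?_⟩
  · -- Artin–Rees part
    intro s _
    obtain ⟨k, hk⟩ := Ideal.exists_pow_inf_eq_pow_smul I₁ (I₂ ^ s : Ideal B)
    refine ⟨k + s, le_add_self, ?_⟩
    have h1 : I₁ ^ (k + s) ⊓ I₂ ^ (k + s) ≤ I₁ ^ (k + s) ⊓ I₂ ^ s :=
      inf_le_inf le_rfl (Ideal.pow_le_pow_right le_add_self)
    have h2 := hk (k + s) (Nat.le_add_right k s)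
    have h2' : (I₁ ^ (k + s) • (⊤ : Submodule B B) : Submodule B B) = I₁ ^ (k + s) := by
      simp [Ideal.smul_top_eq_map, Ideal.map_id]
    have h3 : I₁ ^ (k + s) ⊓ I₂ ^ s ≤ (I₁ ⊓ I₂) ^ s := by
      have := h2
      rw [h2'] at this
      rw [this]
      calc I₁ ^ (k + s - k) • ((I₁ ^ k • (⊤ : Submodule B B)) ⊓ I₂ ^ s)
          ≤ I₁ ^ (k + s - k) • (I₂ ^ s : Ideal B) :=
            Submodule.smul_mono le_rfl inf_le_right
        _ = I₁ ^ s * I₂ ^ s := by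
            rw [Nat.add_sub_cancel_left]; rfl
        _ = (I₁ * I₂) ^ s := (mul_pow I₁ I₂ s).symm
        _ ≤ (I₁ ⊓ I₂) ^ s := pow_le_pow_left' Ideal.mul_le_inf s
    exact h1.trans h3
  · -- middle exactness
    intro s _
    refine ⟨s + s, le_add_self, fun x y hxy => ?_⟩
    have h : (I₁ ⊔ I₂) ^ (s + s) ≤ I₁ ^ s ⊔ I₂ ^ s := Ideal.sup_pow_add_le_pow_sup_pow
    obtain ⟨a, ha, b, hb, hab⟩ := Submodule.mem_sup.mp (h hxy)
    refine ⟨x - a, by simpa using ha, ?_⟩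
    have : y - (x - a) = -b := by
      have : a + b = x - y := hab
      linear_combination this
    rw [this]
    exact neg_mem hb
  · -- surjectivity
    intro s _ z
    obtain ⟨b, rfl⟩ := Ideal.Quotient.mk_surjective z
    exact ⟨b, 0, by simp⟩
end

section
/- Let A be a commutative local ring and J, J' ⊆ A ideals. Then the sequence of abelian groups 1 → (A/(J∩J'))^× → (A/J)^× × (A/J')^× → (A/(J+J'))^× → 1 is exact, where the first map sends a unit w to the pair of its images under the canonical quotient maps, and the second map sends (u, v) to the image of u times the inverse of the image of v in (A/(J+J'))^×. That is: the first map is injective, its image is exactly the kernel of the second map, and the second map is surjective. -/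
private theorem aux_isUnit_of_mk {A : Type*} [CommRing A] [IsLocalRing A] {J : Ideal A}
    (hJ : J ≠ ⊤) {a : A} (h : IsUnit (Ideal.Quotient.mk J a)) : IsUnit a := by
  by_contra ha
  obtain ⟨u, hu⟩ := h
  obtain ⟨b, hb⟩ := Ideal.Quotient.mk_surjective (I := J) (↑u⁻¹ : A ⧸ J)
  have hmem : a * b - 1 ∈ J := by
    rw [← Ideal.Quotient.eq_zero_iff_mem, map_sub, map_mul, map_one, ← hu, hb]
    simp
  have hJm : J ≤ IsLocalRing.maximalIdeal A := IsLocalRing.le_maximalIdeal hJ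
  have ham : a ∈ IsLocalRing.maximalIdeal A := (IsLocalRing.mem_maximalIdeal a).mpr (mem_nonunits_iff.mpr ha)
  have h1 : (1 : A) ∈ IsLocalRing.maximalIdeal A := by
    have h2 := sub_mem (Ideal.mul_mem_right b _ ham) (hJm hmem)
    simpa using h2
  exact (IsLocalRing.maximalIdeal.isMaximal A).ne_top ((Ideal.eq_top_iff_one _).mpr h1)

/-- Let `A` be a commutative local ring and `J, J' ⊆ A` ideals.  Then the sequence
`1 → (A/(J∩J'))^× → (A/J)^× × (A/J')^× → (A/(J+J'))^× → 1` is exact, where the first map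
sends a unit to the pair of its images and the second map sends `(u, v)` to
`u·v⁻¹` computed in `(A/(J+J'))^×`: the first map is injective, its image is exactly the
kernel of the second map, and the second map is surjective. -/
theorem units_sequence_exact_of_local (A : Type*) [CommRing A] [IsLocalRing A]
    (J J' : Ideal A) :
    Function.Injective (fun w : (A ⧸ (J ⊓ J'))ˣ =>
      (Units.map (Ideal.Quotient.factor (S := J ⊓ J') (T := J) inf_le_left).toMonoidHom w,
       Units.map (Ideal.Quotient.factor (S := J ⊓ J') (T := J') inf_le_right).toMonoidHom w)) ∧
    (∀ z : (A ⧸ J)ˣ × (A ⧸ J')ˣ,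
      ((∃ w : (A ⧸ (J ⊓ J'))ˣ,
        (Units.map (Ideal.Quotient.factor (S := J ⊓ J') (T := J) inf_le_left).toMonoidHom w,
         Units.map (Ideal.Quotient.factor (S := J ⊓ J') (T := J') inf_le_right).toMonoidHom w) = z) ↔
      Units.map (Ideal.Quotient.factor (S := J) (T := J ⊔ J') le_sup_left).toMonoidHom z.1 *
        (Units.map (Ideal.Quotient.factor (S := J') (T := J ⊔ J') le_sup_right).toMonoidHom z.2)⁻¹
          = 1)) ∧
    Function.Surjective (fun z : (A ⧸ J)ˣ × (A ⧸ J')ˣ =>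
      Units.map (Ideal.Quotient.factor (S := J) (T := J ⊔ J') le_sup_left).toMonoidHom z.1 *
        (Units.map (Ideal.Quotient.factor (S := J') (T := J ⊔ J') le_sup_right).toMonoidHom z.2)⁻¹) := by
  refine ⟨?_, ?_, ?_⟩
  · -- injectivity
    intro w₁ w₂ h
    simp only [Prod.mk.injEq] at h
    obtain ⟨a, ha⟩ := Ideal.Quotient.mk_surjective (I := J ⊓ J') (w₁ : A ⧸ (J ⊓ J'))
    obtain ⟨b, hb⟩ := Ideal.Quotient.mk_surjective (I := J ⊓ J') (w₂ : A ⧸ (J ⊓ J'))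
    have h1 : Ideal.Quotient.mk J a = Ideal.Quotient.mk J b := by
      have := congrArg Units.val h.1
      simpa [← ha, ← hb, Ideal.Quotient.factor_mk] using this
    have h2 : Ideal.Quotient.mk J' a = Ideal.Quotient.mk J' b := by
      have := congrArg Units.val h.2
      simpa [← ha, ← hb, Ideal.Quotient.factor_mk] using this
    have hmem : a - b ∈ J ⊓ J' :=
      ⟨Ideal.Quotient.eq.mp h1, Ideal.Quotient.eq.mp h2⟩
    ext
    rw [← ha, ← hb]
    exact Ideal.Quotient.eq.mpr hmem
  · -- exactness in the middle
    rintro ⟨u, v⟩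
    constructor
    · rintro ⟨w, hw⟩
      obtain ⟨a, ha⟩ := Ideal.Quotient.mk_surjective (I := J ⊓ J') (w : A ⧸ (J ⊓ J'))
      simp only [Prod.mk.injEq] at hw
      rw [mul_inv_eq_one]
      ext
      simp only [Units.coe_map, MonoidHom.coe_coe, ← hw.1, ← hw.2, ← ha]
      simp [Ideal.Quotient.factor_mk]
    · intro hz
      rw [mul_inv_eq_one] at hz
      obtain ⟨a, ha⟩ := Ideal.Quotient.mk_surjective (I := J) (u : A ⧸ J)
      obtain ⟨b, hb⟩ := Ideal.Quotient.mk_surjective (I := J') (v : A ⧸ J')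
      have hab : Ideal.Quotient.mk (J ⊔ J') a = Ideal.Quotient.mk (J ⊔ J') b := by
        have := congrArg Units.val hz
        simpa [← ha, ← hb, Ideal.Quotient.factor_mk] using this
      have hmem : a - b ∈ J ⊔ J' := Ideal.Quotient.eq.mp hab
      rw [Submodule.mem_sup] at hmem
      obtain ⟨y, hy, z, hz', hyz⟩ := hmem
      set c := a - y with hc
      have hcJ : Ideal.Quotient.mk J c = u := by
        rw [← ha, hc]
        exact Ideal.Quotient.eq.mpr (by simpa using J.neg_mem hy)
      have hcJ' : Ideal.Quotient.mk J' c = v := by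
        rw [← hb]
        refine Ideal.Quotient.eq.mpr ?_
        have : c - b = z := by rw [hc]; linear_combination -hyz
        rw [this]; exact hz'
      have hcu : IsUnit (Ideal.Quotient.mk (J ⊓ J') c) := by
        by_cases hT : J ⊓ J' = ⊤
        · haveI : Subsingleton (A ⧸ (J ⊓ J')) := Ideal.Quotient.subsingleton_iff.mpr hT
          exact isUnit_of_subsingleton _
        · have : J ≠ ⊤ ∨ J' ≠ ⊤ := by
            by_contra hcon
            push_neg at hcon
            exact hT (by rw [hcon.1, hcon.2, inf_idem])
          have hcA : IsUnit c := by
            rcases this with hne | hne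
            · exact aux_isUnit_of_mk hne (hcJ ▸ u.isUnit)
            · exact aux_isUnit_of_mk hne (hcJ' ▸ v.isUnit)
          exact hcA.map _
      refine ⟨hcu.unit, ?_⟩
      refine Prod.ext ?_ ?_ <;> ext <;>
        simp [IsUnit.unit_spec, Ideal.Quotient.factor_mk, hcJ, hcJ']
  · -- surjectivity
    intro t
    by_cases h : J ⊔ J' = ⊤
    · haveI : Subsingleton (A ⧸ (J ⊔ J')) := Ideal.Quotient.subsingleton_iff.mpr h
      exact ⟨(1, 1), Units.ext (Subsingleton.elim _ _)⟩
    · obtain ⟨a, ha⟩ := Ideal.Quotient.mk_surjective (I := J ⊔ J') (t : A ⧸ (J ⊔ J'))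
      have haA : IsUnit a := aux_isUnit_of_mk h (ha ▸ t.isUnit)
      refine ⟨((haA.map (Ideal.Quotient.mk J)).unit, 1), ?_⟩
      ext
      simp [IsUnit.unit_spec, Ideal.Quotient.factor_mk, ha]
end

section
/- Let R be a commutative ring, A a commutative R-algebra, and I ⊆ A an ideal. Then for every s ≥ 1: (i) d(x) ∈ I^s·Ω¹_{A/R} for every x ∈ I^{s+1}; and (ii) consequently, every element of the kernel of the canonical surjection Ω¹_{A/R}/I^{s+1}Ω¹_{A/R} → Ω¹_{(A/I^{s+1})/R} maps to zero under the canonical map to Ω¹_{A/R}/I^s Ω¹_{A/R}. In particular, the canonical maps Ω¹_{A/R} ⊗_A A/I^s → Ω¹_{(A/I^s)/R} constitute an isomorphism of pro A-modules {Ω¹_{A/R} ⊗_A A/I^s}_s ≅ {Ω¹_{(A/I^s)/R}}_s. -/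
private lemma aux_d_mem (R : Type*) (A : Type*) [CommRing R] [CommRing A]
    [Algebra R A] (I : Ideal A) :
    ∀ s : ℕ, ∀ x ∈ I ^ (s + 1), (KaehlerDifferential.D R A) x ∈
      (I ^ s) • (⊤ : Submodule A (KaehlerDifferential R A)) := by
  intro s
  induction s with
  | zero =>
    intro x hx
    simp [Ideal.one_eq_top, Submodule.top_smul]
  | succ n ih =>
    intro x hx
    rw [pow_succ'] at hx
    refine Submodule.mul_induction_on hx ?_ ?_
    · intro a ha b hb
      rw [Derivation.leibniz]
      refine add_mem ?_ ?_
      · -- a • D b with a ∈ I, D b ∈ I^n • ⊤ (b ∈ I^(n+1))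
        have hDb := ih b hb
        have : a • (KaehlerDifferential.D R A) b ∈
            I • ((I ^ n) • (⊤ : Submodule A (KaehlerDifferential R A))) :=
          Submodule.smul_mem_smul ha hDb
        rwa [← Submodule.smul_assoc, Ideal.smul_eq_mul, ← pow_succ'] at this
      · -- b • D a with b ∈ I^(n+1)
        exact Submodule.smul_mem_smul hb Submodule.mem_top
    · intro x y hx hy
      rw [map_add]
      exact add_mem hx hy

/-- Let `R` be a commutative ring, `A` a commutative `R`-algebra, and `I ⊆ A` an ideal.
Then for every `s ≥ 1`: (i) `d(x) ∈ I^s · Ω¹_{A/R}` for every `x ∈ I^{s+1}`; (ii) every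
differential form `ω ∈ Ω¹_{A/R}` killed by the canonical map `Ω¹_{A/R} → Ω¹_{(A/I^{s+1})/R}`
lies in `I^s · Ω¹_{A/R}` (i.e. every element of the kernel of the canonical surjection
`Ω¹_{A/R}/I^{s+1}Ω¹_{A/R} → Ω¹_{(A/I^{s+1})/R}` maps to zero in `Ω¹_{A/R}/I^s Ω¹_{A/R}`);
and (iii) the canonical map `Ω¹_{A/R} → Ω¹_{(A/I^s)/R}` is surjective.  In particular the
canonical maps `Ω¹_{A/R} ⊗_A A/I^s → Ω¹_{(A/I^s)/R}` constitute an isomorphism of pro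
`A`-modules. -/
theorem kaehler_pro_isomorphism (R : Type*) (A : Type*) [CommRing R] [CommRing A]
    [Algebra R A] (I : Ideal A) :
    ∀ s : ℕ, 1 ≤ s →
      (∀ x ∈ I ^ (s + 1), (KaehlerDifferential.D R A) x ∈
        (I ^ s) • (⊤ : Submodule A (KaehlerDifferential R A))) ∧
      (∀ ω : KaehlerDifferential R A,
        KaehlerDifferential.map R R A (A ⧸ I ^ (s + 1)) ω = 0 →
          ω ∈ (I ^ s) • (⊤ : Submodule A (KaehlerDifferential R A))) ∧
      Function.Surjective (KaehlerDifferential.map R R A (A ⧸ I ^ s)) := by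
  intro s hs
  refine ⟨aux_d_mem R A I s, ?_, ?_⟩
  · intro ω hω
    set J : Ideal A := I ^ (s + 1) with hJ
    have hsurj : Function.Surjective (algebraMap A (A ⧸ J)) :=
      Ideal.Quotient.mk_surjective
    -- 1 ⊗ ω is in the kernel of mapBaseChange
    have h1 : (1 : A ⧸ J) ⊗ₜ[A] ω ∈
        LinearMap.ker (KaehlerDifferential.mapBaseChange R A (A ⧸ J)) := by
      simp [hω]
    have h2 : (1 : A ⧸ J) ⊗ₜ[A] ω ∈
        LinearMap.range (KaehlerDifferential.kerCotangentToTensor R A (A ⧸ J)) := by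
      rw [KaehlerDifferential.range_kerCotangentToTensor R A (A ⧸ J) hsurj]
      exact h1
    obtain ⟨z, hz⟩ := h2
    obtain ⟨⟨x, hx⟩, rfl⟩ := Ideal.toCotangent_surjective _ z
    rw [KaehlerDifferential.kerCotangentToTensor_toCotangent] at hz
    have hxJ : x ∈ J := by
      simpa [Ideal.Quotient.eq_zero_iff_mem] using hx
    -- transfer to the quotient module via quotTensorEquivQuotSMul
    have h3 : Submodule.Quotient.mk (p := J • (⊤ : Submodule A (KaehlerDifferential R A)))
          ((KaehlerDifferential.D R A) x) =
        Submodule.Quotient.mk (p := J • (⊤ : Submodule A (KaehlerDifferential R A))) ω := by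
      have h := congrArg (TensorProduct.quotTensorEquivQuotSMul (KaehlerDifferential R A) J) hz
      rw [show (1 : A ⧸ J) = Ideal.Quotient.mk J 1 from rfl] at h
      simp only [TensorProduct.quotTensorEquivQuotSMul_mk_tmul, one_smul] at h
      exact h
    have h4 : ω - (KaehlerDifferential.D R A) x ∈
        J • (⊤ : Submodule A (KaehlerDifferential R A)) := by
      exact (Submodule.Quotient.eq _).mp h3.symm
    have hle : J • (⊤ : Submodule A (KaehlerDifferential R A)) ≤
        (I ^ s) • (⊤ : Submodule A (KaehlerDifferential R A)) :=
      Submodule.smul_mono_left (Ideal.pow_le_pow_right (Nat.le_succ s))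
    rw [← sub_add_cancel ω ((KaehlerDifferential.D R A) x)]
    exact add_mem (hle h4) (aux_d_mem R A I s x hxJ)
  · exact KaehlerDifferential.map_surjective_of_surjective R R A (A ⧸ I ^ s)
      Ideal.Quotient.mk_surjective
end

section
/- Let p be a prime, A a Noetherian F-finite Z_(p)-algebra in which p is nilpotent, and r ≥ 1. Then the module of absolute Kähler differentials Ω¹_{W_r(A)/ℤ} is a finitely generated W_r(A)-module. -/
namespace KWFAux

/-- The `ℤ`-submodule of `B` spanned by elements of the form `x ^ p ^ k * s` with `s ∈ S`,
together with multiples of `p`. -/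
def FSpan (p k : ℕ) (B : Type*) [CommRing B] (S : Set B) : Submodule ℤ B :=
  Submodule.span ℤ ({b | ∃ x s, s ∈ S ∧ b = x ^ p ^ k * s} ∪ {b | ∃ x, b = (p : B) * x})

namespace FSpan

variable {p k : ℕ} {B C : Type*} [CommRing B] [CommRing C]

lemma mono {S T : Set B} (h : S ⊆ T) : FSpan p k B S ≤ FSpan p k B T := by
  apply Submodule.span_mono
  apply Set.union_subset_union_left
  rintro b ⟨x, s, hs, rfl⟩
  exact ⟨x, s, h hs, rfl⟩

lemma pow_mul_mem {S : Set B} {s : B} (hs : s ∈ S) (x : B) :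
    x ^ p ^ k * s ∈ FSpan p k B S :=
  Submodule.subset_span (Or.inl ⟨x, s, hs, rfl⟩)

lemma pmul_mem (S : Set B) (x : B) : (p : B) * x ∈ FSpan p k B S :=
  Submodule.subset_span (Or.inr ⟨x, rfl⟩)

lemma exists_of_mem_image {S : Set B} (f : B →+* C) (hf : Function.Surjective f) {c : C}
    (hc : c ∈ FSpan p k C (f '' S)) : ∃ b', b' ∈ FSpan p k B S ∧ f b' = c := by
  induction hc using Submodule.span_induction with
  | mem x hx =>
    rcases hx with ⟨x', s', ⟨s, hs, rfl⟩, rfl⟩ | ⟨x', rfl⟩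
    · obtain ⟨x, rfl⟩ := hf x'
      exact ⟨x ^ p ^ k * s, pow_mul_mem hs x, by rw [map_mul, map_pow]⟩
    · obtain ⟨x, rfl⟩ := hf x'
      exact ⟨p * x, pmul_mem _ _, by rw [map_mul, map_natCast]⟩
  | zero => exact ⟨0, zero_mem _, map_zero f⟩
  | add x y _ _ ihx ihy =>
    obtain ⟨bx, hbx, rfl⟩ := ihx
    obtain ⟨by', hby, rfl⟩ := ihy
    exact ⟨bx + by', add_mem hbx hby, map_add f _ _⟩
  | smul z x _ ih =>
    obtain ⟨b', hb', rfl⟩ := ih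
    exact ⟨z • b', Submodule.smul_mem _ z hb', map_zsmul f z b'⟩

end FSpan

variable {p k : ℕ} {B C : Type*} [CommRing B] [CommRing C]

lemma exists_finset_of_ringHom_finite (g : B →+* C) (hg : g.Finite) :
    ∃ S : Finset C, ∀ c : C, ∃ a : C → B, c = ∑ t ∈ S, g (a t) * t := by
  letI := g.toAlgebra
  haveI : Module.Finite B C := hg
  obtain ⟨S, hS⟩ := Module.Finite.fg_top (R := B) (M := C)
  refine ⟨S, fun c => ?_⟩
  have hc : c ∈ Submodule.span B (S : Set C) := hS ▸ Submodule.mem_top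
  obtain ⟨f, -, hf⟩ := Submodule.mem_span_finset.1 hc
  refine ⟨f, ?_⟩
  rw [← hf]
  refine Finset.sum_congr rfl fun t _ => ?_
  rw [Algebra.smul_def, RingHom.algebraMap_toAlgebra]

lemma exists_FSpan_of_pow_finite (g : B →+* B) (hgx : ∀ x, g x = x ^ p ^ k) (hg : g.Finite) :
    ∃ S : Finset B, ∀ b : B, b ∈ FSpan p k B ↑S := by
  obtain ⟨S, hS⟩ := exists_finset_of_ringHom_finite g hg
  refine ⟨S, fun b => ?_⟩
  obtain ⟨a, rfl⟩ := hS b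
  exact Submodule.sum_mem _ fun t ht => by
    rw [hgx]; exact FSpan.pow_mul_mem (Finset.mem_coe.2 ht) _

lemma exists_pow_finite (f : B →+* B) (hf : ∀ x, f x = x ^ p) (hfin : f.Finite) (k : ℕ) :
    ∃ g : B →+* B, (∀ x, g x = x ^ p ^ k) ∧ g.Finite := by
  induction k with
  | zero => exact ⟨RingHom.id B, fun x => by simp, RingHom.Finite.id B⟩
  | succ k ih =>
    obtain ⟨g, hgx, hgf⟩ := ih
    refine ⟨g.comp f, fun x => ?_, RingHom.Finite.comp hgf hfin⟩
    rw [RingHom.comp_apply, hf, hgx, ← pow_mul, ← pow_succ']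

lemma exists_FSpan_lift {A : Type*} [CommRing A] {p k : ℕ}
    (S : Finset (A ⧸ Ideal.span {(p : A)}))
    (hS : ∀ b, b ∈ FSpan p k (A ⧸ Ideal.span {(p : A)}) ↑S) :
    ∃ T : Finset A, ∀ a : A, a ∈ FSpan p k A ↑T := by
  classical
  set π : A →+* A ⧸ Ideal.span {(p : A)} := Ideal.Quotient.mk (Ideal.span {(p : A)}) with hπ
  have hsurj : Function.Surjective π := Ideal.Quotient.mk_surjective
  choose lift hlift using hsurj
  refine ⟨S.image lift, fun a => ?_⟩
  have himg : π '' ↑(S.image lift) = ↑S := by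
    ext c
    simp only [Finset.coe_image, Set.mem_image, Finset.mem_coe]
    constructor
    · rintro ⟨_, ⟨s, hs, rfl⟩, rfl⟩; rw [hlift]; exact hs
    · intro hc; exact ⟨lift c, ⟨c, hc, rfl⟩, hlift c⟩
  have hmem : π a ∈ FSpan p k (A ⧸ Ideal.span {(p : A)}) (π '' ↑(S.image lift)) := by rw [himg]; exact hS _
  obtain ⟨a', ha', hfa⟩ := FSpan.exists_of_mem_image π Ideal.Quotient.mk_surjective hmem
  have hsub : a - a' ∈ Ideal.span {(p : A)} := by
    rw [← Ideal.Quotient.eq]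
    exact hfa.symm
  obtain ⟨c, hc⟩ := Ideal.mem_span_singleton'.1 hsub
  have : a = a' + (p : A) * c := by linear_combination -hc
  rw [this]
  exact add_mem ha' (FSpan.pmul_mem _ c)


section Witt

open WittVector

variable {p : ℕ} [hp : Fact p.Prime] {A : Type*} [CommRing A]

/-- The zeroth coefficient, as a ring homomorphism. -/
def wCoeffZero (p : ℕ) [Fact p.Prime] (A : Type*) [CommRing A] : WittVector p A →+* A where
  toFun x := x.coeff 0
  map_zero' := WittVector.zero_coeff p A 0
  map_one' := WittVector.one_coeff_zero p A
  map_add' := WittVector.add_coeff_zero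
  map_mul' := WittVector.mul_coeff_zero

@[simp] lemma wCoeffZero_apply (x : WittVector p A) : wCoeffZero p A x = x.coeff 0 := rfl

lemma iterate_verschiebung_add (m : ℕ) (x y : WittVector p A) :
    verschiebung^[m] (x + y) = verschiebung^[m] x + verschiebung^[m] y := by
  induction m with
  | zero => rfl
  | succ m ih =>
    rw [Function.iterate_succ_apply', Function.iterate_succ_apply',
      Function.iterate_succ_apply', ih, map_add]

lemma iterate_verschiebung_zero_eq (m : ℕ) : verschiebung^[m] (0 : WittVector p A) = 0 :=
  Function.iterate_fixed (map_zero _) m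

/-- `trunc ∘ V^[m]`, as an additive monoid hom. -/
noncomputable def Psi (m : ℕ) : WittVector p A →+ TruncatedWittVector p (m + 1) A where
  toFun y := WittVector.truncate (m + 1) (verschiebung^[m] y)
  map_zero' := by
    show WittVector.truncate (m + 1) (verschiebung^[m] (0 : WittVector p A)) = 0
    rw [iterate_verschiebung_zero_eq, map_zero]
  map_add' x y := by
    show WittVector.truncate (m + 1) (verschiebung^[m] (x + y)) = _
    rw [iterate_verschiebung_add, map_add]

/-- `ψ a = trunc (V^[m] [a])`. -/
noncomputable def psi (p : ℕ) [Fact p.Prime] {A : Type*} [CommRing A] (m : ℕ) (a : A) :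
    TruncatedWittVector p (m + 1) A :=
  Psi m (teichmuller p a)

lemma psi_def (m : ℕ) (a : A) :
    psi p m a = WittVector.truncate (m + 1) (verschiebung^[m] (teichmuller p a)) := rfl

lemma coeff_iterate_verschiebung_lt (m : ℕ) (x : WittVector p A) (i : ℕ) (hi : i < m) :
    (verschiebung^[m] x).coeff i = 0 := by
  induction m generalizing i with
  | zero => omega
  | succ m ih =>
    rw [Function.iterate_succ_apply']
    cases i with
    | zero => exact verschiebung_coeff_zero _
    | succ i => rw [verschiebung_coeff_succ]; exact ih i (by omega)

lemma trunc_V_eq_psi (m : ℕ) (y : WittVector p A) :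
    WittVector.truncate (m + 1) (verschiebung^[m] y) = psi p m (y.coeff 0) := by
  apply TruncatedWittVector.ext
  intro i
  rw [psi_def, WittVector.coeff_truncate, WittVector.coeff_truncate]
  rcases lt_or_ge (i : ℕ) m with hi | hi
  · rw [coeff_iterate_verschiebung_lt m _ _ hi, coeff_iterate_verschiebung_lt m _ _ hi]
  · have him : (i : ℕ) = m := by have := i.isLt; omega
    have h1 := iterate_verschiebung_coeff y m 0
    have h2 := iterate_verschiebung_coeff (teichmuller p (y.coeff 0)) m 0
    rw [zero_add] at h1 h2
    rw [him, h1, h2, teichmuller_coeff_zero]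

lemma psi_coeff (m : ℕ) (a : A) (i : Fin (m + 1)) :
    (psi p m a).coeff i = if (i : ℕ) = m then a else 0 := by
  rw [psi_def, WittVector.coeff_truncate]
  rcases lt_or_ge (i : ℕ) m with hi | hi
  · rw [coeff_iterate_verschiebung_lt m _ _ hi, if_neg (by omega)]
  · have him : (i : ℕ) = m := by have := i.isLt; omega
    have h1 := iterate_verschiebung_coeff (teichmuller p a) m 0
    rw [zero_add] at h1
    rw [if_pos him, him, h1, teichmuller_coeff_zero]

lemma psi_add (m : ℕ) (a b : A) : psi p m (a + b) = psi p m a + psi p m b := by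
  have h : psi p m (a + b)
      = WittVector.truncate (m + 1) (verschiebung^[m] (teichmuller p a + teichmuller p b)) := by
    rw [trunc_V_eq_psi, WittVector.add_coeff_zero, teichmuller_coeff_zero, teichmuller_coeff_zero]
  rw [h, iterate_verschiebung_add, map_add, ← psi_def, ← psi_def]

lemma psi_zero (m : ℕ) : psi p m (0 : A) = 0 := by
  rw [psi, teichmuller_zero, map_zero]

lemma psi_zsmul (m : ℕ) (z : ℤ) (a : A) : psi p m (z • a) = z • psi p m a := by
  have h : psi p m (z • a) = Psi m (z • teichmuller p a) := by
    have h0 : (z • teichmuller p a).coeff 0 = z • a := by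
      have := map_zsmul (wCoeffZero p A) z (teichmuller p a)
      simpa [teichmuller_coeff_zero] using this
    have := trunc_V_eq_psi m (z • teichmuller p a)
    rw [h0] at this
    exact this.symm
  rw [h, map_zsmul]
  rfl

lemma psi_pmul (m : ℕ) (a : A) :
    psi p m ((p : A) * a) = (p : TruncatedWittVector p (m + 1) A) * psi p m a := by
  have h : psi p m ((p : A) * a) = Psi m ((p : WittVector p A) * teichmuller p a) := by
    have h0 : ((p : WittVector p A) * teichmuller p a).coeff 0 = (p : A) * a := by
      have := map_mul (wCoeffZero p A) (p : WittVector p A) (teichmuller p a)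
      simpa [teichmuller_coeff_zero] using this
    have := trunc_V_eq_psi m ((p : WittVector p A) * teichmuller p a)
    rw [h0] at this
    exact this.symm
  rw [h, show (p : WittVector p A) * teichmuller p a = (p : ℕ) • teichmuller p a from
    (nsmul_eq_mul p (teichmuller p a)).symm, map_nsmul]
  rw [nsmul_eq_mul]
  rfl

lemma pow_mul_psi (m : ℕ) (c t : A) :
    (WittVector.truncate (m + 1) (teichmuller p c)) ^ p * psi p m t
      = psi p m ((frobenius^[m] (teichmuller p (c ^ p))).coeff 0 * t) := by
  have h1 : (teichmuller p c : WittVector p A) ^ p = teichmuller p (c ^ p) :=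
    (map_pow (teichmuller p) c p).symm
  rw [psi_def, ← map_pow, ← map_mul, h1, mul_comm,
    iterate_verschiebung_mul_left, trunc_V_eq_psi, WittVector.mul_coeff_zero,
    teichmuller_coeff_zero, mul_comm]

lemma exists_frobenius_coeff_zero (hA : Nontrivial (A ⧸ Ideal.span {(p : A)})) (m : ℕ)
    (x : WittVector p A) :
    ∃ u : A, (frobenius^[m] x).coeff 0 = x.coeff 0 ^ p ^ m + (p : A) * u := by
  set Q := A ⧸ Ideal.span {(p : A)}
  set π : A →+* Q := Ideal.Quotient.mk (Ideal.span {(p : A)})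
  have hp0 : (p : Q) = 0 := by
    rw [show ((p : ℕ) : Q) = π ((p : ℕ) : A) from (map_natCast π p).symm,
      Ideal.Quotient.eq_zero_iff_mem]
    exact Ideal.subset_span rfl
  haveI : CharP Q p := (CharP.charP_iff_prime_eq_zero hp.out).2 hp0
  have hmap : ∀ (j : ℕ) (y : WittVector p A),
      WittVector.map π (frobenius^[j] y) = frobenius^[j] (WittVector.map π y) := by
    intro j
    induction j with
    | zero => intro y; rfl
    | succ j ih =>
      intro y
      rw [Function.iterate_succ_apply', Function.iterate_succ_apply',
        WittVector.IsPoly.map (WittVector.frobenius_isPoly p) π, ih]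
  have key : π ((frobenius^[m] x).coeff 0) = π (x.coeff 0 ^ p ^ m) := by
    calc π ((frobenius^[m] x).coeff 0)
        = (WittVector.map π (frobenius^[m] x)).coeff 0 := (WittVector.map_coeff π _ 0).symm
      _ = (frobenius^[m] (WittVector.map π x)).coeff 0 := by rw [hmap]
      _ = ((WittVector.map π x).coeff 0) ^ p ^ m := iterate_frobenius_coeff _ m 0
      _ = π (x.coeff 0 ^ p ^ m) := by rw [WittVector.map_coeff, map_pow]
  have hsub : (frobenius^[m] x).coeff 0 - x.coeff 0 ^ p ^ m ∈ Ideal.span {(p : A)} := by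
    rw [← Ideal.Quotient.eq]
    exact key
  obtain ⟨u, hu⟩ := Ideal.mem_span_singleton'.1 hsub
  exact ⟨u, by linear_combination -hu⟩

lemma ker_trunc_eq_psi (m : ℕ) (w : TruncatedWittVector p (m + 1) A)
    (hw : TruncatedWittVector.truncate (Nat.le_succ m) w = 0) :
    ∃ a : A, w = psi p m a := by
  obtain ⟨y, rfl⟩ := WittVector.truncate_surjective p (m + 1) A w
  refine ⟨y.coeff m, ?_⟩
  have htr : WittVector.truncate m y = 0 := by
    rw [← TruncatedWittVector.truncate_wittVector_truncate (Nat.le_succ m), hw]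
  have h0 : ∀ i < m, y.coeff i = 0 := by
    intro i hi
    exact (WittVector.mem_ker_truncate m y).1 (by rw [RingHom.mem_ker, htr]) i hi
  apply TruncatedWittVector.ext
  intro i
  rw [WittVector.coeff_truncate, psi_coeff]
  rcases lt_or_ge (i : ℕ) m with hi | hi
  · rw [if_neg (by omega), h0 _ hi]
  · have him : (i : ℕ) = m := by have := i.isLt; omega
    rw [if_pos him, him]

lemma iterate_frobenius_mul (j : ℕ) (x y : WittVector p A) :
    frobenius^[j] (x * y) = frobenius^[j] x * frobenius^[j] y := by
  induction j generalizing x y with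
  | zero => rfl
  | succ j ih =>
    rw [Function.iterate_succ_apply, Function.iterate_succ_apply,
      Function.iterate_succ_apply, map_mul, ih]

lemma iterate_frobenius_natCast (j n : ℕ) :
    frobenius^[j] ((n : ℕ) : WittVector p A) = n := by
  induction j with
  | zero => rfl
  | succ j ih => rw [Function.iterate_succ_apply, map_natCast, ih]

lemma iterate_frobenius_verschiebung (j : ℕ) (z : WittVector p A) :
    frobenius^[j] (verschiebung^[j] z) = z * (p : WittVector p A) ^ j := by
  induction j generalizing z with
  | zero => simp
  | succ j ih =>
    rw [Function.iterate_succ_apply (f := ⇑(frobenius (p := p) (R := A))),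
      Function.iterate_succ_apply' (f := ⇑(verschiebung (p := p) (R := A))),
      frobenius_verschiebung, iterate_frobenius_mul, ih, iterate_frobenius_natCast,
      pow_succ]
    ring

lemma psi_mul (m : ℕ) (x y : A) :
    psi p m x * psi p m y = psi p m ((p : A) ^ m * (x * y)) := by
  have h0 : ((teichmuller p x : WittVector p A)
      * frobenius^[m] (verschiebung^[m] (teichmuller p y))).coeff 0
      = (p : A) ^ m * (x * y) := by
    rw [iterate_frobenius_verschiebung, WittVector.mul_coeff_zero, WittVector.mul_coeff_zero,
      teichmuller_coeff_zero, teichmuller_coeff_zero]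
    have : ((p : WittVector p A) ^ m).coeff 0 = (p : A) ^ m := by
      rw [show ((p : WittVector p A) ^ m).coeff 0 = wCoeffZero p A ((p : WittVector p A) ^ m)
        from rfl, map_pow, map_natCast]
    rw [this]
    ring
  calc psi p m x * psi p m y
      = WittVector.truncate (m + 1)
        (verschiebung^[m] (teichmuller p x) * verschiebung^[m] (teichmuller p y)) := by
        rw [psi_def, psi_def, map_mul]
    _ = WittVector.truncate (m + 1)
        (verschiebung^[m] (teichmuller p x * frobenius^[m] (verschiebung^[m] (teichmuller p y)))) := by
        rw [iterate_verschiebung_mul_left]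
    _ = psi p m ((p : A) ^ m * (x * y)) := by rw [trunc_V_eq_psi, h0]

lemma ker_elem_mem (hA : Nontrivial (A ⧸ Ideal.span {(p : A)})) (m : ℕ)
    (T : Finset A) (hT : ∀ a : A, a ∈ FSpan p (m + 1) A ↑T) (a : A) :
    psi p m a ∈ FSpan p 1 (TruncatedWittVector p (m + 1) A) (psi p m '' ↑T) := by
  have ha := hT a
  induction ha using Submodule.span_induction with
  | mem b hb =>
    rcases hb with ⟨x, s, hs, rfl⟩ | ⟨x, rfl⟩
    · obtain ⟨u, hu⟩ := exists_frobenius_coeff_zero hA m (teichmuller p (x ^ p))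
      rw [teichmuller_coeff_zero] at hu
      have key := pow_mul_psi (p := p) m x s
      rw [hu] at key
      have expand : ((x ^ p) ^ p ^ m + (p : A) * u) * s
          = x ^ p ^ (m + 1) * s + (p : A) * (u * s) := by
        rw [← pow_mul, ← pow_succ']
        ring
      rw [expand, psi_add, psi_pmul] at key
      have heq : psi p m (x ^ p ^ (m + 1) * s)
          = (WittVector.truncate (m + 1) (teichmuller p x)) ^ p * psi p m s
            - (p : TruncatedWittVector p (m + 1) A) * psi p m (u * s) :=
        eq_sub_of_add_eq key.symm
      rw [heq]
      apply sub_mem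
      · have hmem : psi p m s ∈ psi p m '' (↑T : Set A) := ⟨s, hs, rfl⟩
        have := FSpan.pow_mul_mem (p := p) (k := 1) hmem
          (WittVector.truncate (m + 1) (teichmuller p x))
        simpa [pow_one] using this
      · exact FSpan.pmul_mem _ _
    · rw [psi_pmul]
      exact FSpan.pmul_mem _ _
  | zero => rw [psi_zero]; exact zero_mem _
  | add x y _ _ ihx ihy => rw [psi_add]; exact add_mem ihx ihy
  | smul z x _ ih => rw [psi_zsmul]; exact Submodule.smul_mem _ z ih

lemma wittGen (hA : Nontrivial (A ⧸ Ideal.span {(p : A)}))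
    (hks : ∀ k : ℕ, ∃ T : Finset A, ∀ a : A, a ∈ FSpan p k A ↑T) (m : ℕ) :
    ∃ S : Finset (TruncatedWittVector p m A),
      ∀ w, w ∈ FSpan p 1 (TruncatedWittVector p m A) ↑S := by
  classical
  induction m with
  | zero =>
    refine ⟨∅, fun w => ?_⟩
    have hw : w = 0 := TruncatedWittVector.ext (fun i => i.elim0)
    rw [hw]
    exact zero_mem _
  | succ m ih =>
    obtain ⟨S, hS⟩ := ih
    obtain ⟨T, hT⟩ := hks (m + 1)
    set τ : TruncatedWittVector p (m + 1) A →+* TruncatedWittVector p m A :=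
      TruncatedWittVector.truncate (Nat.le_succ m) with hτdef
    have hτ : Function.Surjective τ := TruncatedWittVector.truncate_surjective (Nat.le_succ m)
    choose lift hlift using hτ
    refine ⟨S.image lift ∪ T.image (psi p m), fun w => ?_⟩
    have himg : τ '' ↑(S.image lift) = ↑S := by
      ext c
      simp only [Finset.coe_image, Set.mem_image, Finset.mem_coe]
      constructor
      · rintro ⟨_, ⟨s, hs, rfl⟩, rfl⟩; rw [hlift]; exact hs
      · intro hc; exact ⟨lift c, ⟨c, hc, rfl⟩, hlift c⟩
    have h1 : τ w ∈ FSpan p 1 (TruncatedWittVector p m A) (τ '' ↑(S.image lift)) := by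
      rw [himg]; exact hS _
    obtain ⟨w', hw', hww⟩ := FSpan.exists_of_mem_image τ
      (TruncatedWittVector.truncate_surjective (Nat.le_succ m)) h1
    have hker : τ (w - w') = 0 := by rw [map_sub, hww, sub_self]
    obtain ⟨a, ha⟩ := ker_trunc_eq_psi m (w - w') hker
    have h2 : w - w' ∈ FSpan p 1 (TruncatedWittVector p (m + 1) A) (psi p m '' ↑T) :=
      ha ▸ ker_elem_mem hA m T hT a
    have h3 : w = w' + (w - w') := by ring
    rw [h3]
    refine add_mem (FSpan.mono ?_ hw') (FSpan.mono ?_ h2)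
    · rw [Finset.coe_union]; exact Set.subset_union_left
    · intro x hx
      simp only [Finset.coe_union, Finset.coe_image]
      exact Set.mem_union_right _ hx

lemma p_nilpotent_witt (hnil : IsNilpotent (p : A)) (m : ℕ) :
    IsNilpotent (p : TruncatedWittVector p (m + 1) A) := by
  obtain ⟨n, hn⟩ := hnil
  induction m with
  | zero =>
    refine ⟨n, ?_⟩
    have h : (p : TruncatedWittVector p 1 A) ^ n
        = WittVector.truncate 1 ((p : WittVector p A) ^ n) := by
      rw [map_pow, map_natCast]
    rw [h]
    apply TruncatedWittVector.ext
    intro i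
    rw [WittVector.coeff_truncate, TruncatedWittVector.coeff_zero]
    have hi : (i : ℕ) = 0 := by have := i.isLt; omega
    rw [hi, show ((p : WittVector p A) ^ n).coeff 0
      = wCoeffZero p A ((p : WittVector p A) ^ n) from rfl, map_pow, map_natCast, hn]
  | succ m ih =>
    obtain ⟨N, hN⟩ := ih
    set τ : TruncatedWittVector p (m + 1 + 1) A →+* TruncatedWittVector p (m + 1) A :=
      TruncatedWittVector.truncate (Nat.le_succ (m + 1))
    have hker : τ ((p : TruncatedWittVector p (m + 1 + 1) A) ^ N) = 0 := by
      rw [map_pow, map_natCast, hN]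
    obtain ⟨a, ha⟩ := ker_trunc_eq_psi (m + 1) _ hker
    have chain : ∀ i : ℕ, ∃ c : A,
        (p : TruncatedWittVector p (m + 1 + 1) A) ^ (N * 2 ^ i)
          = psi p (m + 1) ((p : A) ^ i * c) := by
      intro i
      induction i with
      | zero => exact ⟨a, by simpa using ha⟩
      | succ i ihc =>
        obtain ⟨c, hc⟩ := ihc
        refine ⟨(p : A) ^ (m + i) * c ^ 2, ?_⟩
        have h1 : (p : TruncatedWittVector p (m + 1 + 1) A) ^ (N * 2 ^ (i + 1))
            = ((p : TruncatedWittVector p (m + 1 + 1) A) ^ (N * 2 ^ i)) ^ 2 := by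
          rw [← pow_mul]
          ring_nf
        rw [h1, hc, sq, psi_mul]
        ring_nf
    obtain ⟨c, hc⟩ := chain n
    refine ⟨N * 2 ^ n, ?_⟩
    rw [hc, hn, zero_mul, psi_zero]

end Witt

lemma kaehler_finite {p : ℕ} (B : Type*) [CommRing B] (hnil : IsNilpotent ((p : ℕ) : B))
    (S : Finset B) (hS : ∀ b : B, b ∈ FSpan p 1 B ↑S) :
    Module.Finite B (KaehlerDifferential ℤ B) := by
  classical
  set Ω := KaehlerDifferential ℤ B with hΩ
  set D := KaehlerDifferential.D ℤ B with hD
  set N : Submodule B Ω := Submodule.span B (⇑D '' ↑S) with hN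
  set I : Ideal B := Ideal.span {((p : ℕ) : B)} with hI
  have key : ∀ b : B, D b ∈ N ⊔ I • (⊤ : Submodule B Ω) := by
    intro b
    have hb := hS b
    induction hb using Submodule.span_induction with
    | mem x hx =>
      rcases hx with ⟨x, s, hs, rfl⟩ | ⟨x, rfl⟩
      · rw [pow_one, Derivation.leibniz]
        apply add_mem
        · refine Submodule.mem_sup_left ?_
          exact Submodule.smul_mem _ _ (Submodule.subset_span ⟨s, hs, rfl⟩)
        · refine Submodule.mem_sup_right ?_
          rw [Derivation.leibniz_pow]
          have hrw : s • ((p : ℕ) • (x ^ (p - 1) • D x))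
              = ((p : ℕ) : B) • (s • (x ^ (p - 1) • D x)) := by
            rw [← Nat.cast_smul_eq_nsmul B p (x ^ (p - 1) • D x)]
            exact smul_comm _ _ _
          rw [hrw]
          exact Submodule.smul_mem_smul (Ideal.subset_span rfl) Submodule.mem_top
      · have hDp : D (((p : ℕ) : B) * x) = ((p : ℕ) : B) • D x := by
          rw [Derivation.leibniz]
          simp
        rw [hDp]
        exact Submodule.mem_sup_right
          (Submodule.smul_mem_smul (Ideal.subset_span rfl) Submodule.mem_top)
    | zero => rw [map_zero]; exact zero_mem _
    | add x y _ _ ihx ihy => rw [map_add]; exact add_mem ihx ihy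
    | smul z x _ ih =>
      have : D (z • x) = z • D x := D.map_smul z x
      rw [this]
      exact zsmul_mem ih z
  have hspan : Submodule.span B (Set.range ⇑D) ≤ N ⊔ I • ⊤ := by
    rw [Submodule.span_le]
    rintro _ ⟨b, rfl⟩
    exact key b
  have htop : (⊤ : Submodule B Ω) ≤ N ⊔ I • ⊤ :=
    le_trans (le_of_eq (KaehlerDifferential.span_range_derivation (R := ℤ) (S := B)).symm) hspan
  obtain ⟨n, hn⟩ := hnil
  have iter : ∀ j : ℕ, (⊤ : Submodule B Ω) ≤ N ⊔ I ^ j • ⊤ := by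
    intro j
    induction j with
    | zero =>
      rw [pow_zero, Ideal.one_eq_top, Submodule.top_smul]
      exact le_sup_right
    | succ j ih =>
      refine le_trans ih (sup_le le_sup_left ?_)
      refine le_trans (Submodule.smul_mono (le_refl _) htop) ?_
      rw [Submodule.smul_sup]
      refine sup_le (le_trans ?_ le_sup_left) ?_
      · exact Submodule.smul_le.2 fun r _ x hx => Submodule.smul_mem N r hx
      · have hsm : I ^ j • I • (⊤ : Submodule B Ω) = I ^ (j + 1) • ⊤ := by
          rw [← Submodule.smul_assoc, smul_eq_mul, ← pow_succ]
        rw [hsm]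
        exact le_sup_right
  have hfin : (⊤ : Submodule B Ω) ≤ N := by
    have h := iter n
    rw [hI, Ideal.span_singleton_pow, hn, Ideal.span_singleton_eq_bot.mpr rfl,
      Submodule.bot_smul, sup_bot_eq] at h
    exact h
  refine ⟨⟨Finset.image (⇑D) S, ?_⟩⟩
  rw [Finset.coe_image, ← hN]
  exact eq_top_iff.mpr hfin

end KWFAux

/-- Let `A` be a Noetherian, F-finite `ℤ_(p)`-algebra (every prime `q ≠ p` is invertible in
`A`, and `A/pA` is F-finite) in which `p` is nilpotent, and `r ≥ 1`.  Then the module of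
absolute Kähler differentials `Ω¹_{W_r(A)/ℤ}` is a finitely generated `W_r(A)`-module. -/
theorem kaehlerDifferential_wittVector_finite (p : ℕ) [Fact p.Prime]
    (A : Type*) [CommRing A] [IsNoetherianRing A]
    (hZp : ∀ q : ℕ, q.Prime → q ≠ p → IsUnit (q : A))
    (hFF : IsFFinite p (A ⧸ Ideal.span {(p : A)}))
    (hpnil : IsNilpotent (p : A)) (r : ℕ) (hr : 1 ≤ r) :
    Module.Finite (TruncatedWittVector p r A)
      (KaehlerDifferential ℤ (TruncatedWittVector p r A)) := by
  classical
  rcases subsingleton_or_nontrivial A with hA | hA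
  · haveI : Subsingleton (TruncatedWittVector p r A) :=
      ⟨fun x y => TruncatedWittVector.ext fun i => Subsingleton.elim _ _⟩
    haveI := Module.subsingleton (TruncatedWittVector p r A)
      (KaehlerDifferential ℤ (TruncatedWittVector p r A))
    refine ⟨⟨∅, ?_⟩⟩
    refine Submodule.eq_top_iff'.mpr fun x => ?_
    have hx : x = 0 := Subsingleton.elim _ _
    rw [hx]
    exact zero_mem _
  · have hntq : Nontrivial (A ⧸ Ideal.span {(p : A)}) := by
      rcases subsingleton_or_nontrivial (A ⧸ Ideal.span {(p : A)}) with hq | hq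
      · exfalso
        have h1 : (1 : A ⧸ Ideal.span {(p : A)}) = 0 := Subsingleton.elim _ _
        have h2 : (1 : A) ∈ Ideal.span {(p : A)} := by
          rw [← Ideal.Quotient.eq_zero_iff_mem]
          simpa using h1
        have h3 : IsUnit ((p : ℕ) : A) :=
          Ideal.span_singleton_eq_top.1 ((Ideal.eq_top_iff_one _).2 h2)
        obtain ⟨n, hn⟩ := hpnil
        have h4 : IsUnit ((0 : A)) := hn ▸ h3.pow n
        rw [isUnit_zero_iff] at h4
        exact zero_ne_one (α := A) h4
      · exact hq
    obtain ⟨f, hfx, hff⟩ := hFF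
    have hks : ∀ k : ℕ, ∃ T : Finset A, ∀ a : A, a ∈ KWFAux.FSpan p k A ↑T := by
      intro k
      obtain ⟨g, hgx, hgf⟩ := KWFAux.exists_pow_finite f hfx hff k
      obtain ⟨S, hS⟩ := KWFAux.exists_FSpan_of_pow_finite g hgx hgf
      exact KWFAux.exists_FSpan_lift S hS
    obtain ⟨m, rfl⟩ : ∃ m, r = m + 1 := ⟨r - 1, by omega⟩
    obtain ⟨S, hS⟩ := KWFAux.wittGen hntq hks (m + 1)
    exact KWFAux.kaehler_finite _ (KWFAux.p_nilpotent_witt hpnil m) S hS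
end
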